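/- arXiv:2504.06652 — 7 statements merged into one kernel-verified Lean document; each statement's English description precedes it below -/
import Mathlib

section
/- Let G = (V,E) be a connected static graph on n vertices and let k be a real number with 1 < k < n. If Z ⊆ V is a set of vertices such that no two distinct vertices u, v ∈ Z are connected by a path of at most k edges in G, then |Z| < 2n/k. -/
open Finset

lemma aux_dist_getVert_le {V : Type*} {G : SimpleGraph V} (hconn : G.Connected)
    {u v : V} (p : G.Walk u v) (i : ℕ) : G.dist u (p.getVert i) ≤ i := by
  induction p generalizing i with
  | nil => simp [SimpleGraph.Walk.getVert, SimpleGraph.dist_self]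
  | cons h q ih =>
    cases i with
    | zero => simp [SimpleGraph.Walk.getVert]
    | succ i =>
      rw [SimpleGraph.Walk.getVert_cons_succ]
      calc G.dist _ _ ≤ G.dist _ _ + G.dist _ _ := hconn.dist_triangle
        _ ≤ 1 + i := by
            gcongr
            · exact SimpleGraph.dist_le (SimpleGraph.Walk.cons h .nil)
            · exact ih i
        _ = i + 1 := by ring

lemma aux_dist_getVert_right {V : Type*} {G : SimpleGraph V}
    {u v : V} (p : G.Walk u v) (i : ℕ) : G.dist (p.getVert i) v ≤ p.length - i := by
  induction p generalizing i with
  | nil => simp [SimpleGraph.Walk.getVert]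
  | cons h q ih =>
    cases i with
    | zero =>
      simpa using SimpleGraph.dist_le (SimpleGraph.Walk.cons h q)
    | succ i =>
      rw [SimpleGraph.Walk.getVert_cons_succ]
      simpa using ih i

lemma aux_dist_getVert_eq {V : Type*} {G : SimpleGraph V} (hconn : G.Connected)
    {u v : V} (p : G.Walk u v) (hp : p.length = G.dist u v) {i : ℕ}
    (hi : i ≤ p.length) : G.dist u (p.getVert i) = i := by
  have h1 := aux_dist_getVert_le hconn p i
  have h2 := aux_dist_getVert_right p i
  have h3 : G.dist u v ≤ G.dist u (p.getVert i) + G.dist (p.getVert i) v :=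
    hconn.dist_triangle
  omega

lemma aux_ball_card {V : Type*} [Fintype V] {G : SimpleGraph V} (hconn : G.Connected)
    (z : V) (r : ℕ) (hr : r < Fintype.card V) :
    r + 1 ≤ (Finset.univ.filter (fun v => G.dist z v ≤ r)).card := by
  classical
  by_cases h : ∃ v, r ≤ G.dist z v
  · obtain ⟨v, hv⟩ := h
    obtain ⟨p, hp⟩ := hconn.exists_walk_length_eq_dist z v
    have hlen : r ≤ p.length := by omega
    have hmap : ∀ i ∈ Finset.range (r + 1),
        p.getVert i ∈ Finset.univ.filter (fun v => G.dist z v ≤ r) := by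
      intro i hi
      simp only [Finset.mem_range] at hi
      simp only [Finset.mem_filter, Finset.mem_univ, true_and]
      rw [aux_dist_getVert_eq hconn p hp (by omega)]
      omega
    have hinj : Set.InjOn (fun i => p.getVert i) (Finset.range (r + 1)) := by
      intro i hi j hj hij
      simp only [Finset.coe_range, Set.mem_Iio] at hi hj
      have : G.dist z (p.getVert i) = G.dist z (p.getVert j) := by
        dsimp only at hij; rw [hij]
      rwa [aux_dist_getVert_eq hconn p hp (by omega),
        aux_dist_getVert_eq hconn p hp (by omega)] at this
    calc r + 1 = (Finset.range (r + 1)).card := by simp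
      _ = ((Finset.range (r + 1)).image (fun i => p.getVert i)).card :=
          (Finset.card_image_of_injOn hinj).symm
      _ ≤ _ := Finset.card_le_card (by
          intro x hx
          simp only [Finset.mem_image] at hx
          obtain ⟨i, hi, rfl⟩ := hx
          exact hmap i hi)
  · push_neg at h
    have : Finset.univ.filter (fun v => G.dist z v ≤ r) = Finset.univ := by
      ext v; simp [le_of_lt (h v)]
    rw [this, Finset.card_univ]
    omega

theorem stmt_0 {V : Type*} [Fintype V] (G : SimpleGraph V) (hconn : G.Connected)
    (n : ℕ) (hn : n = Fintype.card V) (k : ℝ) (hk1 : 1 < k) (hkn : k < n)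
    (Z : Finset V)
    (hZ : ∀ u ∈ Z, ∀ v ∈ Z, u ≠ v → ¬((G.dist u v : ℝ) ≤ k)) :
    (Z.card : ℝ) < 2 * n / k := by
  classical
  have hk0 : (0:ℝ) < k := by linarith
  have hn0 : (0:ℝ) < n := by linarith
  set r : ℕ := ⌊k / 2⌋₊ with hr_def
  have hr_le : (r : ℝ) ≤ k / 2 := Nat.floor_le (by positivity)
  have hr_lt : k / 2 < r + 1 := Nat.lt_floor_add_one _
  have hrn : r < Fintype.card V := by
    rw [← hn]
    have : (r : ℝ) < n := by linarith
    exact_mod_cast this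
  set B : V → Finset V := fun z => Finset.univ.filter (fun v => G.dist z v ≤ r) with hB
  -- disjointness
  have hdisj : (Z : Set V).PairwiseDisjoint B := by
    intro u hu v hv huv
    simp only [Finset.disjoint_left]
    intro w hwu hwv
    simp only [hB, Finset.mem_filter, Finset.mem_univ, true_and] at hwu hwv
    apply hZ u hu v hv huv
    have htri : G.dist u v ≤ G.dist u w + G.dist w v := hconn.dist_triangle
    have hwv' : G.dist w v = G.dist v w := SimpleGraph.dist_comm ..
    have : G.dist u v ≤ 2 * r := by omega
    have : (G.dist u v : ℝ) ≤ 2 * r := by exact_mod_cast this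
    linarith
  have hcount : Z.card * (r + 1) ≤ n := by
    calc Z.card * (r + 1) = ∑ _z ∈ Z, (r + 1) := by simp [mul_comm]
      _ ≤ ∑ z ∈ Z, (B z).card := Finset.sum_le_sum fun z _ => aux_ball_card hconn z r hrn
      _ = (Z.biUnion B).card := (Finset.card_biUnion (fun u hu v hv huv =>
            hdisj (by exact_mod_cast hu) (by exact_mod_cast hv) huv)).symm
      _ ≤ Fintype.card V := Finset.card_le_univ _
      _ = n := hn.symm
  rcases Nat.eq_zero_or_pos Z.card with hZ0 | hZpos
  · rw [hZ0]
    push_cast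
    positivity
  · rw [lt_div_iff₀ hk0]
    have hcast : (Z.card : ℝ) * (r + 1) ≤ n := by exact_mod_cast hcount
    have hZpos' : (0:ℝ) < Z.card := by exact_mod_cast hZpos
    nlinarith
end

section
/- Let 𝒢 = (G_1, ..., G_L) be a temporal graph on vertex set V of size n, with every snapshot G_t connected, and let k be an integer with 1 ≤ k < n and L ≥ kn. Let u, v be distinct vertices such that there exist kn distinct time steps t at which the snapshot G_t contains a path between u and v of at most k edges. Then there exists a strict journey from u to v of length at most k in 𝒢 using only edges at those time steps. -/
section Aux

variable {V : Type*} [DecidableEq V]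

/-- One Bellman-Ford-style relaxation step along the walk `p`, capped at `k+1`. -/
noncomputable def stepD (k : ℕ) (d : V → ℕ) {H : SimpleGraph V} {u v : V} (p : H.Walk u v) :
    V → ℕ := fun x =>
  min (d x) ((Finset.range p.length).fold min (k+1)
    fun i => if p.getVert (i+1) = x then d (p.getVert i) + 1 else k+1)

lemma stepD_le (k : ℕ) (d : V → ℕ) {H : SimpleGraph V} {u v : V} (p : H.Walk u v) (x : V) :
    stepD k d p x ≤ d x := min_le_left _ _

lemma stepD_le_cap (k : ℕ) (d : V → ℕ) {H : SimpleGraph V} {u v : V} (p : H.Walk u v) (x : V) :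
    stepD k d p x ≤ k + 1 :=
  le_trans (min_le_right _ _) ((Finset.fold_min_le _).mpr (Or.inl le_rfl))

lemma stepD_relax (k : ℕ) (d : V → ℕ) {H : SimpleGraph V} {u v : V} (p : H.Walk u v)
    {i : ℕ} (hi : i < p.length) :
    stepD k d p (p.getVert (i+1)) ≤ d (p.getVert i) + 1 := by
  refine le_trans (min_le_right _ _) ((Finset.fold_min_le _).mpr (Or.inr ⟨i, Finset.mem_range.mpr hi, ?_⟩))
  simp

lemma one_le_stepD (k : ℕ) (d : V → ℕ) {H : SimpleGraph V} {u v : V} (p : H.Walk u v)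
    (hd : ∀ y, y ≠ u → 1 ≤ d y) {x : V} (hx : x ≠ u) : 1 ≤ stepD k d p x := by
  refine le_min (hd x hx) ((Finset.le_fold_min _).mpr ⟨Nat.succ_le_succ (Nat.zero_le _), fun i _ => ?_⟩)
  split <;> omega

lemma stepD_u (k : ℕ) (d : V → ℕ) {H : SimpleGraph V} {u v : V} (p : H.Walk u v)
    (hd : d u = 0) : stepD k d p u = 0 :=
  Nat.le_antisymm (le_trans (min_le_left _ _) hd.le) (Nat.zero_le _)

lemma stepD_lt (k : ℕ) (d : V → ℕ) {H : SimpleGraph V} {u v : V} (p : H.Walk u v) {x : V}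
    (hlt : stepD k d p x < d x) (hk : stepD k d p x ≤ k) :
    ∃ i < p.length, p.getVert (i+1) = x ∧ d (p.getVert i) + 1 ≤ stepD k d p x := by
  set F := (Finset.range p.length).fold min (k+1)
    (fun i => if p.getVert (i+1) = x then d (p.getVert i) + 1 else k+1) with hF
  have hs : stepD k d p x = min (d x) F := rfl
  have hFd : F < d x := by
    by_contra h
    rw [hs, min_eq_left (le_of_not_gt h)] at hlt
    exact lt_irrefl _ hlt
  have hsF : stepD k d p x = F := by rw [hs, min_eq_right hFd.le]
  have h1 : F ≤ F := le_rfl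
  rcases (Finset.fold_min_le _).mp h1 with h | ⟨i, hi, hfi⟩
  · rw [← hsF] at h; omega
  · refine ⟨i, Finset.mem_range.mp hi, ?_⟩
    rw [← hsF] at hfi
    by_cases hc : p.getVert (i+1) = x
    · rw [if_pos hc] at hfi; exact ⟨hc, hfi⟩
    · rw [if_neg hc] at hfi; omega

/-- The sequence of relaxation maps. -/
noncomputable def Dseq (k : ℕ) (u v : V) (p : ℕ → (H : SimpleGraph V) × H.Walk u v) :
    ℕ → V → ℕ
  | 0 => fun x => if x = u then 0 else k + 1
  | j+1 => stepD k (Dseq k u v p j) (p j).2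

lemma path_bound {m : ℕ} (a : ℕ → ℕ) (h : ∀ i < m, a (i+1) ≤ a i + 1) : a m ≤ a 0 + m := by
  induction m with
  | zero => simp
  | succ m ih =>
      have := h m (Nat.lt_succ_self m)
      have := ih (fun i hi => h i (Nat.lt_succ_of_lt hi))
      omega

end Aux

/-- A strict journey in a temporal graph `G` of lifetime `L`: `l` edges, vertices `w 0, ..., w l`,
traversed at strictly increasing time steps `t 0 < t 1 < ... < t (l-1)` within `[1, L]`. -/
def IsJourney {V : Type*} (G : ℕ → SimpleGraph V) (L l : ℕ) (w : ℕ → V) (t : ℕ → ℕ) : Prop :=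
  (∀ i < l, (G (t i)).Adj (w i) (w (i + 1))) ∧
  (∀ i < l, 1 ≤ t i ∧ t i ≤ L) ∧
  (∀ i j, i < j → j < l → t i < t j)

theorem stmt_3 {V : Type*} [Fintype V] (G : ℕ → SimpleGraph V) (L : ℕ)
    (hconn : ∀ t, 1 ≤ t → t ≤ L → (G t).Connected)
    (n : ℕ) (hn : n = Fintype.card V)
    (k : ℕ) (hk1 : 1 ≤ k) (hkn : k < n) (hL : k * n ≤ L)
    (u v : V) (huv : u ≠ v)
    (T : Finset ℕ) (hTcard : T.card = k * n)
    (hT : ∀ t ∈ T, 1 ≤ t ∧ t ≤ L ∧ ∃ p : (G t).Walk u v, p.length ≤ k) :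
    ∃ (l : ℕ) (w : ℕ → V) (tm : ℕ → ℕ), l ≤ k ∧ IsJourney G L l w tm ∧
      (∀ i < l, tm i ∈ T) ∧ w 0 = u ∧ w l = v := by
  classical
  set m := k * n with hm
  -- the sorted enumeration of T
  let τ : ℕ → ℕ := fun j => if h : j < m then ((T.orderIsoOfFin hTcard ⟨j, h⟩ : T) : ℕ) else 0
  have hτT : ∀ j < m, τ j ∈ T := by
    intro j hj
    simp only [τ, dif_pos hj]
    exact (T.orderIsoOfFin hTcard ⟨j, hj⟩).2
  have hτmono : ∀ a b, a < b → b < m → τ a < τ b := by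
    intro a b hab hb
    have ha : a < m := hab.trans hb
    simp only [τ, dif_pos ha, dif_pos hb]
    exact_mod_cast (T.orderIsoOfFin hTcard).strictMono (show (⟨a, ha⟩ : Fin m) < ⟨b, hb⟩ from hab)
  -- chosen walks
  have hex : ∀ j, ∃ q : (H : SimpleGraph V) × H.Walk u v,
      j < m → q.1 = G (τ j) ∧ q.2.length ≤ k := by
    intro j
    by_cases h : j < m
    · obtain ⟨-, -, q, hq⟩ := hT (τ j) (hτT j h)
      exact ⟨⟨G (τ j), q⟩, fun _ => ⟨rfl, hq⟩⟩
    · exact ⟨⟨⊤, SimpleGraph.Walk.cons (by simp [huv]) SimpleGraph.Walk.nil⟩,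
        fun h' => absurd h' h⟩
  let p : ℕ → (H : SimpleGraph V) × H.Walk u v := fun j => (hex j).choose
  have hp : ∀ j < m, (p j).1 = G (τ j) ∧ (p j).2.length ≤ k := fun j hj => (hex j).choose_spec hj
  let D : ℕ → V → ℕ := Dseq k u v p
  have hD0 : ∀ x, D 0 x = if x = u then 0 else k + 1 := fun x => rfl
  have hDs : ∀ j, D (j + 1) = stepD k (D j) (p j).2 := fun j => rfl
  -- basic invariants
  have hDu : ∀ j, D j u = 0 := by
    intro j
    induction j with
    | zero => simp [hD0]
    | succ j ih => rw [hDs]; exact stepD_u k (D j) (p j).2 ih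
  have hDcap : ∀ j x, D j x ≤ k + 1 := by
    intro j
    induction j with
    | zero => intro x; rw [hD0]; split <;> omega
    | succ j ih => intro x; rw [hDs]; exact stepD_le_cap k (D j) (p j).2 x
  have hDone : ∀ j x, x ≠ u → 1 ≤ D j x := by
    intro j
    induction j with
    | zero => intro x hx; rw [hD0, if_neg hx]; omega
    | succ j ih => intro x hx; rw [hDs]; exact one_le_stepD k (D j) (p j).2 ih hx
  -- soundness
  have sound : ∀ j, j ≤ m → ∀ x, D j x ≤ k →
      ∃ (l : ℕ) (w : ℕ → V) (tm : ℕ → ℕ), l ≤ D j x ∧ (∀ i < l, (G (tm i)).Adj (w i) (w (i + 1))) ∧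
        (∀ a b, a < b → b < l → tm a < tm b) ∧ (∀ i < l, ∃ j' < j, tm i = τ j') ∧
        w 0 = u ∧ w l = x := by
    intro j
    induction j with
    | zero =>
        intro _ x hx
        have hxu : x = u := by
          by_contra h
          rw [hD0, if_neg h] at hx; omega
        exact ⟨0, fun _ => u, fun _ => 0, Nat.zero_le _, fun i hi => absurd hi (by omega),
          fun a b _ hb => absurd hb (by omega), fun i hi => absurd hi (by omega), rfl, hxu.symm⟩
    | succ j ih =>
        intro hjm x hx
        have hj : j < m := hjm
        have hle : D (j + 1) x ≤ D j x := by rw [hDs]; exact stepD_le k (D j) (p j).2 x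
        rcases eq_or_lt_of_le hle with heq | hlt
        · obtain ⟨l, w, tm, h1, h2, h3, h4, h5, h6⟩ := ih hj.le x (heq ▸ hx)
          exact ⟨l, w, tm, heq ▸ h1, h2, h3,
            fun i hi => (h4 i hi).imp fun j' ⟨hj', ht⟩ => ⟨hj'.trans (Nat.lt_succ_self j), ht⟩,
            h5, h6⟩
        · rw [hDs] at hlt hx
          obtain ⟨i, hi, hgv, hsl⟩ := stepD_lt k (D j) (p j).2 hlt hx
          have hprev : D j ((p j).2.getVert i) ≤ k := by omega
          obtain ⟨l, w, tm, h1, h2, h3, h4, h5, h6⟩ := ih hj.le _ hprev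
          refine ⟨l + 1, fun i' => if i' ≤ l then w i' else x,
            fun i' => if i' < l then tm i' else τ j, ?_, ?_, ?_, ?_, ?_, ?_⟩
          · rw [hDs]; omega
          · intro i' hi'
            rcases Nat.lt_or_ge i' l with h | h
            · simpa [if_pos h, if_pos h.le, if_pos (Nat.succ_le_of_lt h)] using h2 i' h
            · have hi'l : i' = l := by omega
              simp only [if_neg (by omega : ¬ i' < l), if_pos (by omega : i' ≤ l),
                if_neg (by omega : ¬ i' + 1 ≤ l)]
              rw [hi'l]
              have hadj := (p j).2.adj_getVert_succ hi
              rw [hgv, ← h6] at hadj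
              rwa [(hp j hj).1] at hadj
          · intro a b hab hb
            rcases Nat.lt_or_ge b l with h | h
            · simpa [if_pos h, if_pos (hab.trans h)] using h3 a b hab h
            · simp only [if_pos (by omega : a < l), if_neg (by omega : ¬ b < l)]
              obtain ⟨j', hj', ht⟩ := h4 a (by omega)
              rw [ht]
              exact hτmono j' j hj' hj
          · intro i' hi'
            rcases Nat.lt_or_ge i' l with h | h
            · simp only [if_pos h]
              obtain ⟨j', hj', ht⟩ := h4 i' h
              exact ⟨j', hj'.trans (Nat.lt_succ_self j), ht⟩
            · simp only [if_neg (by omega : ¬ i' < l)]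
              exact ⟨j, Nat.lt_succ_self j, rfl⟩
          · show (if 0 ≤ l then w 0 else x) = u
            rw [if_pos (Nat.zero_le l)]; exact h5
          · show (if l + 1 ≤ l then w (l + 1) else x) = x
            rw [if_neg (by omega)]
  -- main claim : there is j ≤ m with D j v ≤ k
  have main : ∃ j ≤ m, D j v ≤ k := by
    by_contra hbad
    push_neg at hbad
    have hbad' : ∀ j ≤ m, D j v = k + 1 := fun j hj =>
      le_antisymm (hDcap j v) (hbad j hj)
    -- progress
    have prog : ∀ j < m, ∑ x, D (j + 1) x < ∑ x, D j x := by
      intro j hj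
      have hlen : (p j).2.length ≤ k := (hp j hj).2
      have hnot : ¬ ∀ i < (p j).2.length,
          D (j + 1) ((p j).2.getVert (i + 1)) ≤ D (j + 1) ((p j).2.getVert i) + 1 := by
        intro hall
        have := path_bound (fun i => D (j + 1) ((p j).2.getVert i)) hall
        simp only [SimpleGraph.Walk.getVert_zero, SimpleGraph.Walk.getVert_length] at this
        rw [hDu (j + 1), hbad' (j + 1) hj] at this
        omega
      push_neg at hnot
      obtain ⟨i, hi, hjump⟩ := hnot
      have hrel : D (j + 1) ((p j).2.getVert (i + 1)) ≤ D j ((p j).2.getVert i) + 1 := by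
        rw [hDs]; exact stepD_relax k (D j) (p j).2 hi
      have hstrict : D (j + 1) ((p j).2.getVert i) < D j ((p j).2.getVert i) := by omega
      exact Finset.sum_lt_sum
        (fun x _ => by rw [hDs]; exact stepD_le k (D j) (p j).2 x)
        ⟨(p j).2.getVert i, Finset.mem_univ _, hstrict⟩
    have hΦ : ∀ j ≤ m, (∑ x, D j x) + j ≤ ∑ x, D 0 x := by
      intro j
      induction j with
      | zero => intro _; omega
      | succ j ih =>
          intro hjm
          have h1 := prog j hjm
          have h2 := ih (Nat.le_of_succ_le hjm)
          omega
    -- Φ 0 value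
    have hvmem : v ∈ Finset.univ.erase u := Finset.mem_erase.mpr ⟨huv.symm, Finset.mem_univ v⟩
    have hcard1 : (Finset.univ.erase u).card = n - 1 := by
      rw [Finset.card_erase_of_mem (Finset.mem_univ u), Finset.card_univ, hn]
    have hΦ0 : ∑ x, D 0 x = (n - 1) * (k + 1) := by
      rw [← Finset.sum_erase_add Finset.univ (D 0) (Finset.mem_univ u), hDu 0, add_zero]
      rw [Finset.sum_congr rfl (fun x hx => by
        rw [hD0, if_neg (Finset.mem_erase.mp hx).1]), Finset.sum_const, hcard1, smul_eq_mul]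
    -- lower bound on Φ m
    have hΦm : (n - 2) + (k + 1) ≤ ∑ x, D m x := by
      rw [← Finset.sum_erase_add Finset.univ (D m) (Finset.mem_univ u), hDu m, add_zero,
        ← Finset.sum_erase_add _ (D m) hvmem, hbad' m le_rfl]
      have hc2 : ((Finset.univ.erase u).erase v).card = n - 2 := by
        rw [Finset.card_erase_of_mem hvmem, hcard1]
        omega
      have : ((Finset.univ.erase u).erase v).card • 1 ≤ ∑ x ∈ (Finset.univ.erase u).erase v, D m x :=
        Finset.card_nsmul_le_sum _ _ _ (fun x hx =>
          hDone m x (Finset.mem_erase.mp (Finset.mem_erase.mp hx).2).1)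
      rw [hc2, smul_eq_mul, mul_one] at this
      omega
    have hfin := hΦ m le_rfl
    rw [hΦ0] at hfin
    obtain ⟨n', rfl⟩ : ∃ n', n = n' + 2 := ⟨n - 2, by omega⟩
    have hexp : (n' + 2 - 1) * (k + 1) = k * n' + n' + k + 1 := by
      show (n' + 1) * (k + 1) = _
      ring
    rw [hexp] at hfin
    have hm' : m = k * n' + 2 * k := by rw [hm]; ring
    generalize hS : (∑ x, D m x) = S at hfin hΦm
    clear_value m
    generalize hK : k * n' = K at hfin hm'
    omega
  obtain ⟨j, hjm, hjv⟩ := main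
  obtain ⟨l, w, tm, h1, h2, h3, h4, h5, h6⟩ := sound j hjm v hjv
  have htmT : ∀ i < l, tm i ∈ T := by
    intro i hi
    obtain ⟨j', hj', ht⟩ := h4 i hi
    rw [ht]
    exact hτT j' (hj'.trans_le hjm)
  refine ⟨l, w, tm, h1.trans hjv, ⟨h2, fun i hi => ?_, h3⟩, htmT, h5, h6⟩
  obtain ⟨ht1, ht2, -⟩ := hT (tm i) (htmT i hi)
  exact ⟨ht1, ht2⟩
end

section
/- Let 𝒢 be a temporal graph on n vertices with every snapshot connected and lifetime L ≥ n − 1. Then for every pair of vertices (u,v) and every starting time t with t ≤ L − n + 2, there exists a strict journey from u to v whose first edge is traversed at a time step ≥ t and whose last edge is traversed at a time step ≤ t + n − 2 (in particular the journey uses at most n − 1 edges). -/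
/-- Reachable from `u` by a journey using times in `[t, t+k)`. -/
def ReachBy {V : Type*} (G : ℕ → SimpleGraph V) (L : ℕ) (u : V) (t k : ℕ) (x : V) : Prop :=
  ∃ (l : ℕ) (w : ℕ → V) (tm : ℕ → ℕ), IsJourney G L l w tm ∧ w 0 = u ∧ w l = x ∧
    ∀ i < l, t ≤ tm i ∧ tm i < t + k

lemma reachBy_self {V : Type*} (G : ℕ → SimpleGraph V) (L : ℕ) (u : V) (t k : ℕ) :
    ReachBy G L u t k u :=
  ⟨0, fun _ => u, fun _ => 0, ⟨fun i hi => by omega, fun i hi => by omega,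
    fun i j _ hj => by omega⟩, rfl, rfl, fun i hi => by omega⟩

lemma reachBy_mono {V : Type*} {G : ℕ → SimpleGraph V} {L : ℕ} {u : V} {t k : ℕ} {x : V}
    (h : ReachBy G L u t k x) : ReachBy G L u t (k + 1) x := by
  obtain ⟨l, w, tm, hJ, h0, hl, hw⟩ := h
  exact ⟨l, w, tm, hJ, h0, hl, fun i hi => ⟨(hw i hi).1, by have := (hw i hi).2; omega⟩⟩

lemma reachBy_extend {V : Type*} {G : ℕ → SimpleGraph V} {L : ℕ} {u : V} {t k : ℕ} {x y : V}
    (h : ReachBy G L u t k y) (hadj : (G (t + k)).Adj y x) (ht1 : 1 ≤ t) (htk : t + k ≤ L) :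
    ReachBy G L u t (k + 1) x := by
  obtain ⟨l, w, tm, ⟨hA, hB, hS⟩, h0, hl, hw⟩ := h
  refine ⟨l + 1, fun i => if i = l + 1 then x else w i, fun i => if i = l then t + k else tm i,
    ⟨?_, ?_, ?_⟩, ?_, ?_, ?_⟩ <;> dsimp only
  · intro i hi
    rcases Nat.lt_or_ge i l with hil | hil
    · rw [if_neg (by omega : i ≠ l), if_neg (by omega : i ≠ l + 1),
        if_neg (by omega : i + 1 ≠ l + 1)]
      exact hA i hil
    · have hil' : i = l := by omega
      subst hil'
      rw [if_pos rfl, if_neg (by omega : i ≠ i + 1), if_pos rfl, hl]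
      exact hadj
  · intro i hi
    rcases eq_or_ne i l with rfl | hne
    · rw [if_pos rfl]; omega
    · rw [if_neg hne]; exact hB i (by omega)
  · intro i j hij hj
    rcases eq_or_ne j l with rfl | hne
    · rw [if_neg (by omega : i ≠ j), if_pos rfl]
      exact (hw i hij).2
    · rw [if_neg (by omega : i ≠ l), if_neg hne]
      exact hS i j hij (by omega)
  · rw [if_neg (by omega : (0 : ℕ) ≠ l + 1)]; exact h0
  · rw [if_pos rfl]
  · intro i hi
    rcases eq_or_ne i l with rfl | hne
    · rw [if_pos rfl]; omega
    · rw [if_neg hne]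
      have := hw i (by omega)
      omega

lemma walk_cross {V : Type*} {H : SimpleGraph V} {S : Set V} {a b : V}
    (p : H.Walk a b) (ha : a ∈ S) (hb : b ∉ S) :
    ∃ c d, H.Adj c d ∧ c ∈ S ∧ d ∉ S := by
  induction p with
  | nil => exact absurd ha hb
  | @cons a c b h p ih =>
    by_cases hc : c ∈ S
    · exact ih hc hb
    · exact ⟨a, c, h, ha, hc⟩

theorem stmt_4 {V : Type*} [Fintype V] (G : ℕ → SimpleGraph V) (L : ℕ)
    (hconn : ∀ t, 1 ≤ t → t ≤ L → (G t).Connected)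
    (n : ℕ) (hn : n = Fintype.card V) (hL : n - 1 ≤ L)
    (u v : V) (t : ℕ) (ht1 : 1 ≤ t) (ht : t + n ≤ L + 2) :
    ∃ (l : ℕ) (w : ℕ → V) (tm : ℕ → ℕ), l ≤ n - 1 ∧ IsJourney G L l w tm ∧
      w 0 = u ∧ w l = v ∧ ∀ i < l, t ≤ tm i ∧ tm i ≤ t + n - 2 := by
  classical
  have hn1 : 1 ≤ n := by rw [hn]; exact Fintype.card_pos_iff.mpr ⟨u⟩
  set S : ℕ → Finset V := fun k => Finset.univ.filter (ReachBy G L u t k) with hS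
  have hmono : ∀ k, S k ⊆ S (k + 1) := by
    intro k x hx
    simp only [hS, Finset.mem_filter, Finset.mem_univ, true_and] at hx ⊢
    exact reachBy_mono hx
  have huS : ∀ k, u ∈ S k := by
    intro k
    simp only [hS, Finset.mem_filter, Finset.mem_univ, true_and]
    exact reachBy_self G L u t k
  have key : ∀ k, k ≤ n - 1 → S k = Finset.univ ∨ k + 1 ≤ (S k).card := by
    intro k
    induction k with
    | zero =>
      intro _
      right
      exact Finset.card_pos.mpr ⟨u, huS 0⟩
    | succ k ih =>
      intro hk
      rcases ih (by omega) with huniv | hcard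
      · left
        exact Finset.univ_subset_iff.mp (huniv ▸ hmono k)
      · by_cases huniv : S k = Finset.univ
        · left
          exact Finset.univ_subset_iff.mp (huniv ▸ hmono k)
        · right
          obtain ⟨x, hx⟩ : ∃ x, x ∉ S k := by
            by_contra h
            push_neg at h
            exact huniv (Finset.eq_univ_iff_forall.mpr h)
          have hconn' : (G (t + k)).Connected := hconn (t + k) (by omega) (by omega)
          obtain ⟨p⟩ := hconn' u x
          obtain ⟨c, d, hadj, hc, hd⟩ := walk_cross (S := (↑(S k) : Set V)) p
            (by simpa using huS k) (by simpa using hx)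
          have hc' : ReachBy G L u t k c := by
            simpa [hS, Finset.mem_filter] using hc
          have hd' : d ∈ S (k + 1) := by
            simp only [hS, Finset.mem_filter, Finset.mem_univ, true_and]
            exact reachBy_extend hc' hadj ht1 (by omega)
          have hss : S k ⊂ S (k + 1) := ⟨hmono k, fun hsub => hd (by
            simpa using hsub hd')⟩
          have := Finset.card_lt_card hss
          omega
  have hfin : S (n - 1) = Finset.univ := by
    rcases key (n - 1) le_rfl with h | h
    · exact h
    · apply Finset.eq_univ_of_card
      have h2 : (S (n - 1)).card ≤ Fintype.card V := Finset.card_le_univ _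
      omega
  have hv : ReachBy G L u t (n - 1) v := by
    have : v ∈ S (n - 1) := hfin ▸ Finset.mem_univ v
    simpa [hS, Finset.mem_filter] using this
  obtain ⟨l, w, tm, hJ, h0, hl, hw⟩ := hv
  obtain ⟨hA, hB, hSinc⟩ := hJ
  have hlow : ∀ i < l, t + i ≤ tm i := by
    intro i
    induction i with
    | zero => intro hi; exact (hw 0 hi).1
    | succ i ih =>
      intro hi
      have h1 := ih (by omega)
      have h2 := hSinc i (i + 1) (by omega) hi
      omega
  have hll : l ≤ n - 1 := by
    rcases Nat.eq_zero_or_pos l with rfl | hpos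
    · omega
    · have h1 := hlow (l - 1) (by omega)
      have h2 := (hw (l - 1) (by omega)).2
      omega
  exact ⟨l, w, tm, hll, ⟨hA, hB, hSinc⟩, h0, hl, fun i hi =>
    ⟨(hw i hi).1, by have := (hw i hi).2; omega⟩⟩
end

section
/- Let 𝒢 be a temporal graph on n vertices with lifetime L ≥ k n^2, where 0 < k < n is an integer, and suppose that every snapshot G_t (t ≤ L) is connected and has diameter at most k. Then for any starting vertex there exists a strict journey starting there that visits all n vertices and traverses at most k(n−1) < kn edges, taking at most kn(n−1) time steps. -/
namespace TGExpl

variable {V : Type*}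

/-- `RB G a u m j x` : `x` is reachable from `u` by a strict journey using at most `j` edges,
with all traversal times in the window `(a, a+m]`. -/
def RB (G : ℕ → SimpleGraph V) (a : ℕ) (u : V) : ℕ → ℕ → V → Prop
  | 0, _, x => x = u
  | m + 1, j, x => RB G a u m j x ∨
      ∃ j' y, j = j' + 1 ∧ RB G a u m j' y ∧ (G (a + m + 1)).Adj y x

lemma RB_self (G : ℕ → SimpleGraph V) (a : ℕ) (u : V) (m j : ℕ) : RB G a u m j u := by
  induction m with
  | zero => rfl
  | succ m ih => exact Or.inl ih

lemma RB_mono_j {G : ℕ → SimpleGraph V} {a : ℕ} {u : V} {m j j' : ℕ} {x : V}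
    (h : RB G a u m j x) (hj : j ≤ j') : RB G a u m j' x := by
  induction m generalizing j j' x with
  | zero => exact h
  | succ m ih =>
    rcases h with h | ⟨j0, y, rfl, hy, hadj⟩
    · exact Or.inl (ih h hj)
    · obtain ⟨d, rfl⟩ : ∃ d, j' = (j0 + d) + 1 := ⟨j' - j0 - 1, by omega⟩
      exact Or.inr ⟨j0 + d, y, rfl, ih hy (Nat.le_add_right _ _), hadj⟩

lemma RB_journey {G : ℕ → SimpleGraph V} {a : ℕ} {u : V} {m j : ℕ} {x : V}
    (h : RB G a u m j x) :
    ∃ (l : ℕ) (w : ℕ → V) (t : ℕ → ℕ), l ≤ j ∧ w 0 = u ∧ w l = x ∧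
      (∀ i < l, (G (t i)).Adj (w i) (w (i + 1))) ∧
      (∀ i < l, a + 1 ≤ t i ∧ t i ≤ a + m) ∧
      (∀ i i', i < i' → i' < l → t i < t i') := by
  induction m generalizing j x with
  | zero =>
    subst h
    exact ⟨0, fun _ => x, fun _ => 0, Nat.zero_le _, rfl, rfl,
      fun i hi => absurd hi (Nat.not_lt_zero i),
      fun i hi => absurd hi (Nat.not_lt_zero i),
      fun i i' _ hi' => absurd hi' (Nat.not_lt_zero i')⟩
  | succ m ih =>
    rcases h with h | ⟨j', y, rfl, hy, hadj⟩
    · obtain ⟨l, w, t, hl, h0, hlx, hadj', hbd, hmono⟩ := ih h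
      exact ⟨l, w, t, hl, h0, hlx, hadj',
        fun i hi => ⟨(hbd i hi).1, le_trans (hbd i hi).2 (Nat.le_succ _)⟩, hmono⟩
    · obtain ⟨l, w, t, hl, h0, hly, hadj', hbd, hmono⟩ := ih hy
      refine ⟨l + 1, fun i => if i ≤ l then w i else x,
        fun i => if i < l then t i else a + m + 1, by omega, ?_, ?_, ?_, ?_, ?_⟩
      · simpa using h0
      · simp
      · intro i hi
        by_cases hil : i < l
        · have h1 : i ≤ l := le_of_lt hil
          have h2 : i + 1 ≤ l := hil
          simpa [h1, h2, hil] using hadj' i hil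
        · have hil' : i = l := by omega
          simp only [if_pos (by omega : i ≤ l), if_neg (by omega : ¬ (i + 1 ≤ l)),
            if_neg (by omega : ¬ (i < l))]
          rw [hil', hly]
          exact hadj
      · intro i hi
        by_cases hil : i < l
        · have := hbd i hil
          simp only [if_pos hil]
          omega
        · simp only [if_neg hil]
          omega
      · intro i i' hii' hi'
        by_cases h1 : i' < l
        · have h2 : i < l := lt_trans hii' h1
          simpa [h1, h2] using hmono i i' hii' h1
        · have h2 : i < l := by omega
          have := hbd i h2
          simp only [if_pos h2, if_neg (by omega : ¬ (i' < l))]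
          omega

open scoped Classical in
noncomputable def Bset [Fintype V] (G : ℕ → SimpleGraph V) (a : ℕ) (u : V) (m j : ℕ) :
    Finset V :=
  Finset.univ.filter (fun x => RB G a u m j x)

lemma mem_Bset [Fintype V] {G : ℕ → SimpleGraph V} {a : ℕ} {u : V} {m j : ℕ} {x : V} :
    x ∈ Bset G a u m j ↔ RB G a u m j x := by
  simp [Bset]

noncomputable def Phi [Fintype V] (G : ℕ → SimpleGraph V) (a : ℕ) (u : V) (k m : ℕ) : ℕ :=
  ∑ j ∈ Finset.Icc 1 k, (Bset G a u m j).card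

lemma Phi_zero [Fintype V] (G : ℕ → SimpleGraph V) (a : ℕ) (u : V) (k : ℕ) :
    Phi G a u k 0 = k := by
  have h : ∀ j, Bset G a u 0 j = {u} := by
    intro j
    ext x
    simp only [mem_Bset, Finset.mem_singleton]
    exact Iff.rfl
  simp [Phi, h]

lemma Phi_le [Fintype V] (G : ℕ → SimpleGraph V) (a : ℕ) (u : V) (k m : ℕ) :
    Phi G a u k m ≤ k * Fintype.card V := by
  calc Phi G a u k m ≤ ∑ _j ∈ Finset.Icc 1 k, Fintype.card V :=
        Finset.sum_le_sum (fun j _ => Finset.card_le_univ _)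
    _ = k * Fintype.card V := by simp [Nat.card_Icc]

lemma phi_grow [Fintype V] {G : ℕ → SimpleGraph V} {a : ℕ} {u : V} {k m : ℕ} {v : V}
    (hk : 0 < k)
    (hc : (G (a + m + 1)).Connected)
    (hd : ∀ x y : V, (G (a + m + 1)).dist x y ≤ k)
    (hv : ¬ RB G a u m k v) :
    Phi G a u k m + 1 ≤ Phi G a u k (m + 1) := by
  classical
  obtain ⟨p, hp⟩ := hc.exists_walk_length_eq_dist u v
  have hlen : p.length ≤ k := by rw [hp]; exact hd u v
  have hex : ∃ i, ¬ RB G a u m i (p.getVert i) := by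
    refine ⟨p.length, fun hcon => hv ?_⟩
    rw [p.getVert_length] at hcon
    exact RB_mono_j hcon hlen
  set i0 := Nat.find hex with hi0
  have hspec : ¬ RB G a u m i0 (p.getVert i0) := Nat.find_spec hex
  have hi0le : i0 ≤ p.length := by
    apply Nat.find_min' hex
    intro hcon
    rw [p.getVert_length] at hcon
    exact hv (RB_mono_j hcon hlen)
  have hi0pos : 0 < i0 := by
    rcases Nat.eq_zero_or_pos i0 with h | h
    · exfalso; apply hspec; rw [h, p.getVert_zero]; exact RB_self G a u m 0
    · exact h
  obtain ⟨i', hi'⟩ : ∃ i', i0 = i' + 1 := ⟨i0 - 1, by omega⟩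
  rw [hi'] at hspec hi0le
  have hprev : RB G a u m i' (p.getVert i') := by
    by_contra hcon
    have hlt : i' < Nat.find hex := by rw [← hi0]; omega
    exact Nat.find_min hex hlt hcon
  have hadj : (G (a + m + 1)).Adj (p.getVert i') (p.getVert (i' + 1)) :=
    p.adj_getVert_succ (by omega)
  have hnew : RB G a u (m + 1) (i' + 1) (p.getVert (i' + 1)) :=
    Or.inr ⟨i', p.getVert i', rfl, hprev, hadj⟩
  have hsub : ∀ j, Bset G a u m j ⊆ Bset G a u (m + 1) j := by
    intro j x hx
    rw [mem_Bset] at hx ⊢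
    exact Or.inl hx
  have hmem : i' + 1 ∈ Finset.Icc 1 k := by
    rw [Finset.mem_Icc]
    omega
  have hlt : (Bset G a u m (i' + 1)).card < (Bset G a u (m + 1) (i' + 1)).card := by
    apply Finset.card_lt_card
    rw [Finset.ssubset_iff_of_subset (hsub _)]
    exact ⟨p.getVert (i' + 1), mem_Bset.mpr hnew, fun h => hspec (mem_Bset.mp h)⟩
  have := Finset.sum_lt_sum (s := Finset.Icc 1 k)
    (f := fun j => (Bset G a u m j).card) (g := fun j => (Bset G a u (m + 1) j).card)
    (fun j _ => Finset.card_le_card (hsub j)) ⟨i' + 1, hmem, hlt⟩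
  exact this

lemma reach [Fintype V] {G : ℕ → SimpleGraph V} {a k n : ℕ} (hk : 0 < k)
    (hn : n = Fintype.card V)
    (hgood : ∀ t, a + 1 ≤ t → t ≤ a + k * n →
      (G t).Connected ∧ ∀ x y : V, (G t).dist x y ≤ k)
    (u v : V) : ∃ m ≤ k * (n - 1), RB G a u m k v := by
  have hn1 : 1 ≤ n := by
    rw [hn]; exact Fintype.card_pos_iff.mpr ⟨u⟩
  by_contra hcon
  push_neg at hcon
  have key : ∀ m ≤ k * (n - 1) + 1, k + m ≤ Phi G a u k m := by
    intro m hm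
    induction m with
    | zero => rw [Phi_zero]; omega
    | succ m ih =>
      have hmle : m ≤ k * (n - 1) + 1 := by omega
      have h1 := ih hmle
      have hwindow : a + 1 ≤ a + m + 1 ∧ a + m + 1 ≤ a + k * n := by
        constructor
        · omega
        · have : k * (n - 1) + 1 ≤ k * n := by
            have : k * (n - 1) + k = k * n := by
              rw [← Nat.mul_succ]
              congr 1
              omega
            omega
          omega
      obtain ⟨hc, hd⟩ := hgood (a + m + 1) hwindow.1 hwindow.2
      have hv : ¬ RB G a u m k v := hcon m (by omega)
      have := phi_grow hk hc hd hv
      omega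
  have h2 := key (k * (n - 1) + 1) le_rfl
  have h3 := Phi_le G a u k (k * (n - 1) + 1)
  rw [← hn] at h3
  have h4 : k * (n - 1) + k = k * n := by
    rw [← Nat.mul_succ]; congr 1; omega
  omega

lemma explore [Fintype V] {G : ℕ → SimpleGraph V} {k n L : ℕ} (hk : 0 < k)
    (hn : n = Fintype.card V)
    (hconn : ∀ t, 1 ≤ t → t ≤ L → (G t).Connected)
    (hdiam : ∀ t, 1 ≤ t → t ≤ L → ∀ x y : V, (G t).dist x y ≤ k)
    (vl : List V) (u : V) (a : ℕ) (ha : a + vl.length * (k * n) ≤ L) :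
    ∃ (l : ℕ) (w : ℕ → V) (t : ℕ → ℕ), l ≤ k * vl.length ∧ w 0 = u ∧
      (∀ i < l, (G (t i)).Adj (w i) (w (i + 1))) ∧
      (∀ i < l, a + 1 ≤ t i ∧ t i ≤ a + vl.length * (k * n)) ∧
      (∀ i i', i < i' → i' < l → t i < t i') ∧
      (∀ v ∈ vl, ∃ i ≤ l, w i = v) := by
  induction vl generalizing u a with
  | nil =>
    exact ⟨0, fun _ => u, fun _ => 0, Nat.zero_le _, rfl,
      fun i hi => absurd hi (Nat.not_lt_zero i),
      fun i hi => absurd hi (Nat.not_lt_zero i),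
      fun i i' _ hi' => absurd hi' (Nat.not_lt_zero i'),
      fun v hv => absurd hv List.not_mem_nil⟩
  | cons v vl ih =>
    have hwin : a + k * n ≤ L := by
      have : (v :: vl).length * (k * n) = k * n + vl.length * (k * n) := by
        simp [List.length_cons, Nat.succ_mul, Nat.add_comm]
      omega
    have hgood : ∀ t, a + 1 ≤ t → t ≤ a + k * n →
        (G t).Connected ∧ ∀ x y : V, (G t).dist x y ≤ k := by
      intro t h1 h2
      have hL1 : 1 ≤ t := by omega
      have hL2 : t ≤ L := le_trans h2 hwin
      exact ⟨hconn t hL1 hL2, hdiam t hL1 hL2⟩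
    obtain ⟨m, hm, hr⟩ := reach hk hn hgood u v
    obtain ⟨l₁, w₁, t₁, hl₁, hw₁0, hw₁l, hadj₁, hbd₁, hmono₁⟩ := RB_journey hr
    have hmkn : m ≤ k * n := by
      have : k * (n - 1) ≤ k * n := Nat.mul_le_mul_left k (Nat.sub_le n 1)
      omega
    have hl₁k : l₁ ≤ k := hl₁
    have ha' : (a + k * n) + vl.length * (k * n) ≤ L := by
      have : (v :: vl).length * (k * n) = k * n + vl.length * (k * n) := by
        simp [List.length_cons, Nat.succ_mul, Nat.add_comm]
      omega
    obtain ⟨l₂, w₂, t₂, hl₂, hw₂0, hadj₂, hbd₂, hmono₂, hvis₂⟩ := ih v (a + k * n) ha'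
    refine ⟨l₁ + l₂, fun i => if i < l₁ then w₁ i else w₂ (i - l₁),
      fun i => if i < l₁ then t₁ i else t₂ (i - l₁), ?_, ?_, ?_, ?_, ?_, ?_⟩
    · have : k * (v :: vl).length = k + k * vl.length := by
        simp [List.length_cons, Nat.mul_succ, Nat.add_comm]
      omega
    · by_cases h0 : 0 < l₁
      · simpa [h0] using hw₁0
      · have hl₁0 : l₁ = 0 := by omega
        have hvu : v = u := by rw [← hw₁l, hl₁0, hw₁0]
        simp [h0, hw₂0, hvu]
    · intro i hi
      by_cases h1 : i < l₁
      · by_cases h2 : i + 1 < l₁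
        · simpa [h1, h2] using hadj₁ i h1
        · have hieq : i + 1 = l₁ := by omega
          have hww : w₂ (i + 1 - l₁) = w₁ (i + 1) := by
            rw [hieq, Nat.sub_self, hw₂0]
            exact hw₁l.symm
          simp only [if_pos h1, if_neg h2, hww]
          exact hadj₁ i h1
      · have h2 : ¬ (i + 1 < l₁) := by omega
        have heq : i + 1 - l₁ = (i - l₁) + 1 := by omega
        simp only [if_neg h1, if_neg h2, heq]
        exact hadj₂ (i - l₁) (by omega)
    · intro i hi
      have hlen : (v :: vl).length * (k * n) = k * n + vl.length * (k * n) := by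
        simp [List.length_cons, Nat.succ_mul, Nat.add_comm]
      by_cases h1 : i < l₁
      · have := hbd₁ i h1
        simp only [if_pos h1]
        omega
      · have := hbd₂ (i - l₁) (by omega)
        simp only [if_neg h1]
        omega
    · intro i i' hii' hi'
      by_cases h1 : i' < l₁
      · have h2 : i < l₁ := lt_trans hii' h1
        simpa [h1, h2] using hmono₁ i i' hii' h1
      · by_cases h2 : i < l₁
        · have hb1 := hbd₁ i h2
          have hb2 := hbd₂ (i' - l₁) (by omega)
          simp only [if_pos h2, if_neg h1]
          omega
        · have := hmono₂ (i - l₁) (i' - l₁) (by omega) (by omega)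
          simp only [if_neg h1, if_neg h2]
          exact this
    · intro v' hv'
      rcases List.mem_cons.mp hv' with rfl | hv'
      · refine ⟨l₁, by omega, ?_⟩
        simp only [if_neg (lt_irrefl l₁), Nat.sub_self]
        rw [hw₂0]
      · obtain ⟨i₂, hi₂, hwi₂⟩ := hvis₂ v' hv'
        refine ⟨l₁ + i₂, by omega, ?_⟩
        have : ¬ (l₁ + i₂ < l₁) := by omega
        simp only [if_neg this, Nat.add_sub_cancel_left]
        exact hwi₂

end TGExpl

theorem stmt_9 {V : Type*} [Fintype V] (G : ℕ → SimpleGraph V) (L : ℕ)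
    (n : ℕ) (hn : n = Fintype.card V)
    (k : ℕ) (hk : 0 < k) (hkn : k < n) (hL : k * n ^ 2 ≤ L)
    (hconn : ∀ t, 1 ≤ t → t ≤ L → (G t).Connected)
    (hdiam : ∀ t, 1 ≤ t → t ≤ L → ∀ u v : V, (G t).dist u v ≤ k) (s : V) :
    ∃ (l : ℕ) (w : ℕ → V) (tm : ℕ → ℕ), IsJourney G L l w tm ∧ w 0 = s ∧
      l ≤ k * (n - 1) ∧ (∀ i < l, tm i ≤ k * n * (n - 1)) ∧
      ∀ v : V, ∃ i ≤ l, w i = v := by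
  classical
  have hn1 : 1 ≤ n := by omega
  set vl : List V := (Finset.univ.erase s).toList with hvl
  have hlen : vl.length = n - 1 := by
    rw [hvl, Finset.length_toList, Finset.card_erase_of_mem (Finset.mem_univ s)]
    rw [Finset.card_univ, ← hn]
  have hbound : (n - 1) * (k * n) ≤ L := by
    calc (n - 1) * (k * n) ≤ n * (k * n) := Nat.mul_le_mul_right _ (Nat.sub_le n 1)
      _ = k * n ^ 2 := by ring
      _ ≤ L := hL
  have ha : 0 + vl.length * (k * n) ≤ L := by
    rw [hlen]; omega
  obtain ⟨l, w, tm, hl, hw0, hadj, hbd, hmono, hvis⟩ :=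
    TGExpl.explore hk hn hconn hdiam vl s 0 ha
  rw [hlen] at hl hbd
  refine ⟨l, w, tm, ⟨hadj, ?_, hmono⟩, hw0, hl, ?_, ?_⟩
  · intro i hi
    have := hbd i hi
    constructor
    · omega
    · calc tm i ≤ 0 + (n - 1) * (k * n) := this.2
        _ ≤ L := by omega
  · intro i hi
    have := hbd i hi
    have heq : (n - 1) * (k * n) = k * n * (n - 1) := by ring
    omega
  · intro v
    by_cases hv : v = s
    · exact ⟨0, Nat.zero_le _, by rw [hw0, hv]⟩
    · apply hvis
      rw [hvl, Finset.mem_toList, Finset.mem_erase]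
      exact ⟨hv, Finset.mem_univ v⟩
end

section
/- For every integer n ≥ 3 there exists a temporal graph 𝒢 on n vertices whose underlying graph is a cycle, every snapshot of which is connected, with lifetime L ≥ 2n − 2, and a starting vertex s, such that every exploration of 𝒢 starting at s traverses at least ⌊(3/2)(n−1)⌋ edges. -/
/-- The cycle on `ZMod n`: `i` and `j` are adjacent iff they differ by `1`. -/
def cycleG (n : ℕ) : SimpleGraph (ZMod n) where
  Adj i j := i ≠ j ∧ (j = i + 1 ∨ i = j + 1)
  symm := ⟨fun i j h => ⟨h.1.symm, h.2.symm⟩⟩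
  loopless := ⟨fun i h => h.1 rfl⟩

/-- The path: the cycle with the edge between `m := (n-1)/2` and `m+1` removed. -/
def pathG (n : ℕ) : SimpleGraph (ZMod n) where
  Adj i j := (cycleG n).Adj i j ∧
    ¬((i = (((n - 1) / 2 : ℕ) : ZMod n) ∧ j = (((n - 1) / 2 : ℕ) : ZMod n) + 1) ∨
      (j = (((n - 1) / 2 : ℕ) : ZMod n) ∧ i = (((n - 1) / 2 : ℕ) : ZMod n) + 1))
  symm := ⟨fun i j h => ⟨(h.1).symm, fun hc => h.2 (hc.symm)⟩⟩
  loopless := ⟨fun i h => h.1.1 rfl⟩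

/-- Position of a vertex along the path, measured from the endpoint `m+1`. -/
def posP (n : ℕ) (v : ZMod n) : ℕ := (v - ((((n - 1) / 2 : ℕ) : ZMod n) + 1)).val

lemma cast_ne_zero_zmod {n k : ℕ} [NeZero n] (hk : k ≠ 0) (hk2 : k < n) :
    ((k : ℕ) : ZMod n) ≠ 0 := by
  intro h
  have := ZMod.val_cast_of_lt hk2
  rw [h, ZMod.val_zero] at this
  omega

lemma neg_cast_zmod {n k : ℕ} (hk : k ≤ n) :
    -((k : ℕ) : ZMod n) = ((n - k : ℕ) : ZMod n) := by
  have h : ((k : ℕ) : ZMod n) + ((n - k : ℕ) : ZMod n) = ((n : ℕ) : ZMod n) := by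
    rw [← Nat.cast_add]
    congr 1
    omega
  rw [ZMod.natCast_self] at h
  linear_combination -h

lemma val_sub_one_aux {n : ℕ} [NeZero n] (x : ZMod n) (hx : x ≠ 0) :
    (x - 1).val + 1 = x.val := by
  have h0 : x.val ≠ 0 := fun h => hx ((ZMod.val_eq_zero x).mp h)
  have hlt : x.val < n := ZMod.val_lt x
  have h1 : ((x.val - 1 : ℕ) : ZMod n) = x - 1 := by
    rw [Nat.cast_sub (by omega : 1 ≤ x.val)]
    simp [ZMod.natCast_val, ZMod.cast_id]
  rw [← h1, ZMod.val_cast_of_lt (by omega)]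
  omega

lemma pos_step {n : ℕ} (hn : 3 ≤ n) {i j : ZMod n} (h : (pathG n).Adj i j) :
    posP n j = posP n i + 1 ∨ posP n i = posP n j + 1 := by
  haveI : NeZero n := ⟨by omega⟩
  obtain ⟨⟨hne, hcase⟩, hforb⟩ := h
  rcases hcase with hji | hij
  · -- j = i + 1
    left
    have him : i ≠ (((n - 1) / 2 : ℕ) : ZMod n) := by
      intro hi
      exact hforb (Or.inl ⟨hi, by rw [hji, hi]⟩)
    have hx : j - ((((n - 1) / 2 : ℕ) : ZMod n) + 1) ≠ 0 := by
      intro hzero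
      apply him
      have : j = (((n - 1) / 2 : ℕ) : ZMod n) + 1 := by linear_combination hzero
      rw [hji] at this
      linear_combination this
    have key := val_sub_one_aux _ hx
    have heq : i - ((((n - 1) / 2 : ℕ) : ZMod n) + 1) =
        (j - ((((n - 1) / 2 : ℕ) : ZMod n) + 1)) - 1 := by rw [hji]; ring
    unfold posP
    rw [heq]
    omega
  · -- i = j + 1: symmetric
    right
    have hjm : j ≠ (((n - 1) / 2 : ℕ) : ZMod n) := by
      intro hj
      exact hforb (Or.inr ⟨hj, by rw [hij, hj]⟩)
    have hx : i - ((((n - 1) / 2 : ℕ) : ZMod n) + 1) ≠ 0 := by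
      intro hzero
      apply hjm
      have : i = (((n - 1) / 2 : ℕ) : ZMod n) + 1 := by linear_combination hzero
      rw [hij] at this
      linear_combination this
    have key := val_sub_one_aux _ hx
    have heq : j - ((((n - 1) / 2 : ℕ) : ZMod n) + 1) =
        (i - ((((n - 1) / 2 : ℕ) : ZMod n) + 1)) - 1 := by rw [hij]; ring
    unfold posP
    rw [heq]
    omega

lemma one_ne_zero_zmod {n : ℕ} (hn : 3 ≤ n) : (1 : ZMod n) ≠ 0 := by
  haveI : NeZero n := ⟨by omega⟩
  have := cast_ne_zero_zmod (n := n) (k := 1) one_ne_zero (by omega)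
  simpa using this

lemma two_ne_zero_zmod {n : ℕ} (hn : 3 ≤ n) : (2 : ZMod n) ≠ 0 := by
  haveI : NeZero n := ⟨by omega⟩
  have := cast_ne_zero_zmod (n := n) (k := 2) two_ne_zero (by omega)
  simpa using this

lemma pathG_connected {n : ℕ} (hn : 3 ≤ n) : (pathG n).Connected := by
  haveI : NeZero n := ⟨by omega⟩
  have key : ∀ k : ℕ, ∀ v : ZMod n, posP n v = k →
      (pathG n).Reachable ((((n - 1) / 2 : ℕ) : ZMod n) + 1) v := by
    intro k
    induction k with
    | zero =>
      intro v hv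
      have h1 : v - ((((n - 1) / 2 : ℕ) : ZMod n) + 1) = 0 := (ZMod.val_eq_zero _).mp hv
      have h2 : v = (((n - 1) / 2 : ℕ) : ZMod n) + 1 := by linear_combination h1
      rw [h2]
    | succ k ih =>
      intro v hv
      have hx : v - ((((n - 1) / 2 : ℕ) : ZMod n) + 1) ≠ 0 := by
        intro h
        rw [posP, h] at hv
        simp at hv
      have hu : posP n (v - 1) = k := by
        have hkey := val_sub_one_aux _ hx
        have heq : (v - 1) - ((((n - 1) / 2 : ℕ) : ZMod n) + 1) =
            (v - ((((n - 1) / 2 : ℕ) : ZMod n) + 1)) - 1 := by ring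
        rw [posP, heq]
        rw [posP] at hv
        omega
      have hadj : (pathG n).Adj (v - 1) v := by
        refine ⟨⟨?_, Or.inl (by ring)⟩, ?_⟩
        · intro h
          have : (1 : ZMod n) = 0 := by linear_combination -h
          exact one_ne_zero_zmod hn this
        · rintro (⟨h1, h2⟩ | ⟨h1, h2⟩)
          · rw [posP, h2] at hv
            simp at hv
          · have : (2 : ZMod n) = 0 := by linear_combination h1 - h2
            exact two_ne_zero_zmod hn this
      exact (ih (v - 1) hu).trans hadj.reachable
  have hpre : (pathG n).Preconnected := fun x y => (key _ x rfl).symm.trans (key _ y rfl)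
  haveI : Nonempty (ZMod n) := ⟨0⟩
  exact ⟨hpre⟩

lemma pathG_le_cycleG (n : ℕ) : pathG n ≤ cycleG n := fun _ _ h => h.1

lemma walk_dist_bound (p : ℕ → ℕ) (l : ℕ)
    (h : ∀ i < l, p (i + 1) = p i + 1 ∨ p i = p (i + 1) + 1) :
    ∀ j i, i ≤ j → j ≤ l → p j ≤ p i + (j - i) ∧ p i ≤ p j + (j - i) := by
  intro j
  induction j with
  | zero =>
    intro i hij _
    have : i = 0 := by omega
    subst this
    omega
  | succ k ih =>
    intro i hij hjl
    rcases Nat.eq_or_lt_of_le hij with heq | hlt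
    · rw [heq]
      omega
    · have hik : i ≤ k := by omega
      have h1 := ih i hik (by omega)
      have hstep := h k (by omega)
      omega

theorem stmt_11 (n : ℕ) (hn : 3 ≤ n) :
    ∃ (L : ℕ) (G : ℕ → SimpleGraph (ZMod n)) (s : ZMod n),
      2 * n - 2 ≤ L ∧
      (∀ t, G t ≤ cycleG n) ∧
      (∀ t, 1 ≤ t → t ≤ L → (G t).Connected) ∧
      (∀ i j : ZMod n, (cycleG n).Adj i j → ∃ t, 1 ≤ t ∧ t ≤ L ∧ (G t).Adj i j) ∧
      ∀ (l : ℕ) (w : ℕ → ZMod n) (tm : ℕ → ℕ),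
        IsJourney G L l w tm → w 0 = s → (∀ v : ZMod n, ∃ i ≤ l, w i = v) →
        3 * (n - 1) / 2 ≤ l := by
  haveI : NeZero n := ⟨by omega⟩
  classical
  have ha1 : 1 ≤ (n - 1) / 2 := by omega
  have ha2 : (n - 1) / 2 ≤ n - 2 := by omega
  refine ⟨2 * n, fun t => if t = 1 then cycleG n else pathG n, 0, by omega, ?_, ?_, ?_, ?_⟩
  · intro t
    by_cases ht : t = 1
    · rw [show (fun t => if t = 1 then cycleG n else pathG n) t =
        cycleG n by simp [ht]]
    · rw [show (fun t => if t = 1 then cycleG n else pathG n) t =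
        pathG n by simp [ht]]
      exact pathG_le_cycleG n
  · intro t _ _
    by_cases ht : t = 1
    · rw [show (fun t => if t = 1 then cycleG n else pathG n) t =
        cycleG n by simp [ht]]
      exact (pathG_connected hn).mono (pathG_le_cycleG n)
    · rw [show (fun t => if t = 1 then cycleG n else pathG n) t =
        pathG n by simp [ht]]
      exact pathG_connected hn
  · -- every cycle edge appears at some time
    intro i j hij
    by_cases hforb : (i = (((n - 1) / 2 : ℕ) : ZMod n) ∧ j = (((n - 1) / 2 : ℕ) : ZMod n) + 1) ∨
        (j = (((n - 1) / 2 : ℕ) : ZMod n) ∧ i = (((n - 1) / 2 : ℕ) : ZMod n) + 1)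
    · refine ⟨1, le_refl 1, by omega, ?_⟩
      show (if (1 : ℕ) = 1 then cycleG n else pathG n).Adj i j
      rw [if_pos rfl]
      exact hij
    · refine ⟨2, by omega, by omega, ?_⟩
      show (if (2 : ℕ) = 1 then cycleG n else pathG n).Adj i j
      rw [if_neg (by norm_num)]
      exact ⟨hij, hforb⟩
  · -- the exploration lower bound
    intro l w tm hJ hw0 hexp
    obtain ⟨hadj, htr, hmono⟩ := hJ
    -- all steps are path steps
    have hpstep : ∀ i < l, (pathG n).Adj (w i) (w (i + 1)) := by
      intro i hi
      have h : (if tm i = 1 then cycleG n else pathG n).Adj (w i) (w (i + 1)) := hadj i hi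
      by_cases hti : tm i = 1
      · rw [if_pos hti] at h
        have hi0 : i = 0 := by
          by_contra h0
          have h0' : 0 < i := by omega
          have h1 := hmono 0 i h0' hi
          have h2 := (htr 0 (by omega)).1
          omega
        have hwi : w i = 0 := by rw [hi0]; exact hw0
        refine ⟨h, ?_⟩
        have hm0 : (((n - 1) / 2 : ℕ) : ZMod n) ≠ (0 : ZMod n) :=
          cast_ne_zero_zmod (by omega) (by omega)
        have hm1 : (((n - 1) / 2 : ℕ) : ZMod n) + 1 ≠ (0 : ZMod n) := by
          intro hzero
          have : (((n - 1) / 2 + 1 : ℕ) : ZMod n) = 0 := by push_cast; linear_combination hzero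
          exact cast_ne_zero_zmod (by omega) (by omega) this
        rintro (⟨h1, _⟩ | ⟨_, h1⟩) <;> rw [hwi] at h1
        · exact hm0 h1.symm
        · exact hm1 h1.symm
      · rw [if_neg hti] at h
        exact h
    -- positions
    set p : ℕ → ℕ := fun i => posP n (w i) with hp
    have hstep : ∀ i < l, p (i + 1) = p i + 1 ∨ p i = p (i + 1) + 1 := by
      intro i hi
      exact pos_step hn (hpstep i hi)
    have hbound := walk_dist_bound p l hstep
    -- p 0 = n - 1 - (n-1)/2
    have hp0 : p 0 = n - 1 - (n - 1) / 2 := by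
      show posP n (w 0) = n - 1 - (n - 1) / 2
      rw [hw0, posP, zero_sub]
      have h1 : ((((n - 1) / 2 : ℕ) : ZMod n) + 1) = (((n - 1) / 2 + 1 : ℕ) : ZMod n) := by
        push_cast; ring
      rw [h1, neg_cast_zmod (by omega), ZMod.val_cast_of_lt (by omega)]
      omega
    -- vertex m+1 has position 0, vertex m has position n-1
    obtain ⟨i0, hi0l, hi0⟩ := hexp ((((n - 1) / 2 : ℕ) : ZMod n) + 1)
    obtain ⟨i1, hi1l, hi1⟩ := hexp (((n - 1) / 2 : ℕ) : ZMod n)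
    have hpi0 : p i0 = 0 := by
      show posP n (w i0) = 0
      rw [hi0, posP, sub_self, ZMod.val_zero]
    have hpi1 : p i1 = n - 1 := by
      show posP n (w i1) = n - 1
      rw [hi1, posP]
      have h1 : (((n - 1) / 2 : ℕ) : ZMod n) - ((((n - 1) / 2 : ℕ) : ZMod n) + 1) =
          -((1 : ℕ) : ZMod n) := by push_cast; ring
      rw [h1, neg_cast_zmod (by omega), ZMod.val_cast_of_lt (by omega)]
    -- counting
    rcases le_total i0 i1 with hcase | hcase
    · have h1 := hbound i1 i0 hcase hi1l
      have h2 := hbound i0 0 (Nat.zero_le _) hi0l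
      omega
    · have h1 := hbound i0 i1 hcase hi0l
      have h2 := hbound i1 0 (Nat.zero_le _) hi1l
      omega
end

section
/- For every integer n ≥ 3 there exists a temporal graph 𝒢 on n vertices whose underlying graph is a cycle, every snapshot connected, with lifetime L = 2n − 3, and a starting vertex s, such that there is exactly one exploration of 𝒢 starting at s, and this exploration traverses 2n − 3 edges. -/
def Gd (n t : ℕ) : SimpleGraph (ZMod n) where
  Adj i j := (i ≠ j ∧ (j = i + 1 ∨ i = j + 1)) ∧
    (if t ≤ n - 2 then ¬((i = 0 ∧ j = 1) ∨ (i = 1 ∧ j = 0))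
     else ¬((i = 1 ∧ j = 2) ∨ (i = 2 ∧ j = 1)))
  symm := ⟨by
    intro i j h
    refine ⟨⟨h.1.1.symm, h.1.2.symm⟩, ?_⟩
    have h2 := h.2
    split at h2 <;> split <;> tauto⟩
  loopless := ⟨fun i h => h.1.1 rfl⟩

def Xc (n i : ℕ) : ℤ := if i ≤ n-2 then -(i:ℤ) else (i:ℤ) + 4 - 2*n
def wc (n i : ℕ) : ZMod n := ((Xc n i : ℤ) : ZMod n)

section aux
variable {n : ℕ}

lemma zmod_int_eq_iff' (x y : ℤ) : ((x : ZMod n) = (y : ZMod n)) ↔ (n : ℤ) ∣ (x - y) := by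
  rw [ZMod.intCast_eq_intCast_iff]
  exact Int.modEq_iff_dvd.trans (by rw [show y - x = -(x-y) by ring, Int.dvd_neg])

variable (hn : 3 ≤ n)
include hn

lemma dvd_small' {z : ℤ} (h : (n:ℤ) ∣ z) (h1 : -n < z) (h2 : z < n) : z = 0 := by
  rcases h with ⟨c, rfl⟩
  have hn' : (0:ℤ) < n := by exact_mod_cast Nat.lt_of_lt_of_le (by norm_num) hn
  rcases lt_trichotomy c 0 with hc | rfl | hc
  · nlinarith
  · ring
  · nlinarith

lemma dvd_small2' {z : ℤ} (h : (n:ℤ) ∣ z) (h1 : -2*n < z) (h2 : z < n) : z = 0 ∨ z = -n := by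
  rcases h with ⟨c, rfl⟩
  have hn' : (0:ℤ) < n := by exact_mod_cast Nat.lt_of_lt_of_le (by norm_num) hn
  have : c = 0 ∨ c = -1 := by
    rcases lt_trichotomy c 0 with hc | rfl | hc
    · rcases eq_or_lt_of_le (show c ≤ -1 by omega) with h | h
      · exact Or.inr h
      · nlinarith
    · exact Or.inl rfl
    · nlinarith
  rcases this with rfl | rfl
  · left; ring
  · right; ring

/-- Master uniqueness lemma. -/
lemma master {l : ℕ} {w : ℕ → ZMod n} {tm : ℕ → ℕ}
    (hJ : IsJourney (Gd n) (2*n-3) l w tm) (h0 : w 0 = 0)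
    (hcov : ∀ v : ZMod n, ∃ i ≤ l, w i = v) :
    l = 2*n-3 ∧ (∀ i ≤ l, w i = wc n i) ∧ (∀ i < l, tm i = i + 1) := by
  classical
  obtain ⟨hadj, htb, hmono⟩ := hJ
  -- small ZMod facts via int casts
  have hzext : ∀ {x y : ℤ}, ((x : ZMod n) = (y : ZMod n)) → (n:ℤ) ∣ (x - y) :=
    fun {x y} h => (zmod_int_eq_iff' x y).1 h
  -- time lower bounds
  have tmlb : ∀ i < l, i + 1 ≤ tm i := by
    intro i
    induction i with
    | zero => intro hi; exact (htb 0 hi).1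
    | succ m ih =>
      intro hi
      have h1 := ih (by omega)
      have h2 := hmono m (m+1) (by omega) hi
      omega
  have tmgap : ∀ dd a, a + dd < l → tm a + dd ≤ tm (a + dd) := by
    intro dd
    induction dd with
    | zero => intro a _; simp
    | succ m ih =>
      intro a hi
      have h1 := ih a (by omega)
      have h2 := hmono (a+m) (a+(m+1)) (by omega) (by rwa [show a+(m+1) = a+m+1 by ring] at hi ⊢)
      omega
  have hl1 : 1 ≤ l := by
    by_contra hl
    obtain ⟨i, hil, hiw⟩ := hcov 1
    have : i = 0 := by omega
    rw [this, h0] at hiw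
    have := dvd_small' hn (hzext (show ((0:ℤ):ZMod n) = ((1:ℤ):ZMod n) by exact_mod_cast hiw)) (by omega) (by omega)
    omega
  have hlub : l ≤ 2*n-3 := by
    have h1 := tmlb (l-1) (by omega)
    have h2 := (htb (l-1) (by omega)).2
    omega
  -- the integer lift
  set d : ℕ → ℤ := fun i => if w (i+1) = w i + 1 then 1 else -1 with hd
  set X : ℕ → ℤ := fun i => ∑ j ∈ Finset.range i, d j with hXdef
  have hX0 : X 0 = 0 := by simp [hXdef]
  have hXsucc : ∀ i, X (i+1) = X i + d i := fun i => Finset.sum_range_succ d i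
  have hstep : ∀ i < l, (w (i+1) = w i + 1 ∧ X (i+1) = X i + 1) ∨
      (w (i+1) = w i - 1 ∧ X (i+1) = X i - 1) := by
    intro i hi
    have hadji := (hadj i hi).1.2
    by_cases hc : w (i+1) = w i + 1
    · exact Or.inl ⟨hc, by rw [hXsucc]; simp only [hd]; rw [if_pos hc]⟩
    · refine Or.inr ⟨?_, by rw [hXsucc]; simp only [hd]; rw [if_neg hc]; ring⟩
      have : w i = w (i+1) + 1 := hadji.resolve_left hc
      rw [this]; ring
  have hcast : ∀ i ≤ l, w i = ((X i : ℤ) : ZMod n) := by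
    intro i
    induction i with
    | zero => intro _; rw [hX0, h0]; norm_num
    | succ m ih =>
      intro hi
      have ihm := ih (by omega)
      rcases hstep m (by omega) with ⟨hw, hX⟩ | ⟨hw, hX⟩ <;>
        rw [hw, hX, ihm] <;> push_cast <;> ring
  have hXbound : ∀ i ≤ l, -(i:ℤ) ≤ X i ∧ X i ≤ i := by
    intro i
    induction i with
    | zero => intro _; simp [hX0]
    | succ m ih =>
      intro hi
      have ihm := ih (by omega)
      rcases hstep m (by omega) with ⟨_, hX⟩ | ⟨_, hX⟩ <;> rw [hX] <;> push_cast <;> omega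
  have hXdiff : ∀ a b, a ≤ b → b ≤ l → X b - X a ≤ (b:ℤ) - a ∧ X a - X b ≤ (b:ℤ) - a := by
    have key : ∀ dd a, a + dd ≤ l →
        X (a+dd) - X a ≤ (dd:ℤ) ∧ X a - X (a+dd) ≤ (dd:ℤ) := by
      intro dd
      induction dd with
      | zero => intro a _; simp
      | succ m ih =>
        intro a hi
        have h1 := ih a (by omega)
        have h2 := hstep (a+m) (by omega)
        rw [show a + (m+1) = (a+m)+1 by ring]
        rcases h2 with ⟨_, hX⟩ | ⟨_, hX⟩ <;> rw [hX] <;> push_cast <;> omega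
    intro a b hab hbl
    have := key (b - a) a (by omega)
    rw [show a + (b-a) = b by omega] at this
    push_cast [Nat.cast_sub hab] at this ⊢
    omega
  have hforb : ∀ i < l, if tm i ≤ n-2 then ¬((w i = 0 ∧ w (i+1) = 1) ∨ (w i = 1 ∧ w (i+1) = 0))
      else ¬((w i = 1 ∧ w (i+1) = 2) ∨ (w i = 2 ∧ w (i+1) = 1)) := fun i hi => (hadj i hi).2
  -- first visit of 1
  have hP : ∃ j, j ≤ l ∧ w j = 1 := hcov 1
  obtain ⟨j1, ⟨hj1l, hj1w⟩, hj1minfull⟩ :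
      ∃ j1, (j1 ≤ l ∧ w j1 = 1) ∧ ∀ k < j1, ¬(k ≤ l ∧ w k = 1) :=
    ⟨Nat.find hP, Nat.find_spec hP, fun k hk => Nat.find_min hP hk⟩
  have hmin1 : ∀ k < j1, w k ≠ 1 := by
    intro k hk hwk
    exact hj1minfull k hk ⟨by omega, hwk⟩
  have hj1pos : 1 ≤ j1 := by
    rcases Nat.eq_zero_or_pos j1 with h | h
    · rw [h, h0] at hj1w
      have := dvd_small' hn (hzext (show ((0:ℤ):ZMod n) = ((1:ℤ):ZMod n) by exact_mod_cast hj1w)) (by omega) (by omega)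
      omega
    · omega
  -- X ≤ 0 before j1
  have hXneg : ∀ i < j1, X i ≤ 0 := by
    intro i
    induction i with
    | zero => intro _; omega
    | succ m ih =>
      intro hi
      have ihm := ih (by omega)
      rcases hstep m (by omega) with ⟨hw, hX⟩ | ⟨_, hX⟩
      · rcases eq_or_lt_of_le ihm with he | hlt
        · exfalso
          apply hmin1 (m+1) hi
          rw [hw, hcast m (by omega), he]
          norm_num
        · omega
      · omega
  -- the step entering 1 comes from 0 at a late time
  have hplt : j1 - 1 < l := by omega
  have hpj : j1 - 1 + 1 = j1 := by omega
  have hwp0 : w (j1 - 1) = 0 ∧ n - 2 < tm (j1 - 1) := by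
    have hst := hstep (j1-1) hplt
    rw [hpj, hj1w] at hst
    have hforbp := hforb (j1-1) hplt
    rcases hst with ⟨hw, _⟩ | ⟨hw, _⟩
    · -- w j1 = w(j1-1) + 1, so w(j1-1) = 0
      have hw0 : w (j1-1) = 0 := by linear_combination -hw
      refine ⟨hw0, ?_⟩
      by_contra htc
      rw [if_pos (by omega)] at hforbp
      rw [hpj] at hforbp
      exact hforbp (Or.inl ⟨hw0, hj1w⟩)
    · -- w j1 = w(j1-1) - 1, so w(j1-1) = 2 : impossible
      exfalso
      have hw2 : w (j1-1) = 2 := by linear_combination -hw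
      -- then tm (j1-1) ≤ n-2 (else {1,2} forbidden), so j1-1 ≤ n-3
      have htle : tm (j1-1) ≤ n - 2 := by
        by_contra htc
        rw [if_neg htc] at hforbp
        rw [hpj] at hforbp
        exact hforbp (Or.inr ⟨hw2, hj1w⟩)
      have hidx : j1 - 1 ≤ n - 3 := by
        have := tmlb (j1-1) hplt
        omega
      -- but X (j1-1) ≡ 2 mod n, X ∈ [-(n-3), 0] : impossible
      have hXp := hXneg (j1-1) (by omega)
      have hXlo := (hXbound (j1-1) (by omega)).1
      have hdv := hzext (show ((X (j1-1) : ℤ):ZMod n) = ((2:ℤ):ZMod n) by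
        rw [← hcast (j1-1) (by omega)]; exact_mod_cast hw2)
      have := dvd_small' hn hdv (by push_cast; omega) (by omega)
      omega
  obtain ⟨hwp0, htp⟩ := hwp0
  -- no step ever uses edge {1,2}
  have no12 : ∀ k < l, ¬((w k = 1 ∧ w (k+1) = 2) ∨ (w k = 2 ∧ w (k+1) = 1)) := by
    intro k hk
    rcases Nat.lt_or_ge k (j1 - 1) with hkj | hkj
    · rintro (⟨h1, _⟩ | ⟨_, h1⟩)
      · exact hmin1 k (by omega) h1
      · exact hmin1 (k+1) (by omega) h1
    · have hgap := tmgap (k - (j1-1)) (j1-1) (by omega)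
      rw [show j1 - 1 + (k - (j1-1)) = k by omega] at hgap
      have hforbk := hforb k hk
      rw [if_neg (by omega)] at hforbk
      exact hforbk
  -- global band 2-n ≤ X ≤ 1
  have hband : ∀ i ≤ l, (2:ℤ) - n ≤ X i ∧ X i ≤ 1 := by
    intro i
    induction i with
    | zero => intro _; rw [hX0]; constructor <;> [omega; norm_num]
    | succ m ih =>
      intro hi
      have ihm := ih (by omega)
      rcases hstep m (by omega) with ⟨hw, hX⟩ | ⟨hw, hX⟩
      · -- up-step: blocked at X = 1
        rcases eq_or_lt_of_le ihm.2 with he | hlt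
        · exfalso
          apply no12 m (by omega)
          refine Or.inl ⟨?_, ?_⟩
          · rw [hcast m (by omega), he]; norm_num
          · rw [hw, hcast m (by omega), he]; norm_num
        · omega
      · -- down-step: blocked at X = 2-n
        rcases eq_or_lt_of_le ihm.1 with he | hlt
        · exfalso
          apply no12 m (by omega)
          refine Or.inr ⟨?_, ?_⟩
          · rw [hcast m (by omega), ← he]
            have h2' : ((2 - (n:ℤ) : ℤ) : ZMod n) = ((2:ℤ) : ZMod n) :=
              (zmod_int_eq_iff' _ _).2 ⟨-1, by ring⟩
            exact_mod_cast h2'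
          · rw [hw, hcast m (by omega), ← he]
            rw [show (((2:ℤ) - (n:ℤ) : ℤ) : ZMod n) - 1 = (((1:ℤ) - (n:ℤ) : ℤ) : ZMod n) by
              push_cast; ring]
            have h1' : (((1:ℤ) - (n:ℤ) : ℤ) : ZMod n) = ((1:ℤ) : ZMod n) :=
              (zmod_int_eq_iff' _ _).2 ⟨-1, by ring⟩
            exact_mod_cast h1'
        · omega
  -- pin down X j1 = 1 and X (j1-1) = 0
  have hXj1 : X j1 = 1 := by
    have hdv := hzext (show ((X j1 : ℤ):ZMod n) = ((1:ℤ):ZMod n) by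
      rw [← hcast j1 hj1l]; exact_mod_cast hj1w)
    have hb := hband j1 hj1l
    have := dvd_small' hn hdv (by omega) (by omega)
    omega
  have hXp0 : X (j1-1) = 0 := by
    have hdv := hzext (show ((X (j1-1) : ℤ):ZMod n) = ((0:ℤ):ZMod n) by
      rw [← hcast (j1-1) (by omega)]; exact_mod_cast hwp0)
    have hb := hband (j1-1) (by omega)
    have := dvd_small' hn hdv (by omega) (by omega)
    omega
  -- the visit of 2
  obtain ⟨j2, hj2l, hj2w⟩ := hcov 2
  have hXj2 : X j2 = 2 - n := by
    have hdv := hzext (show ((X j2 : ℤ):ZMod n) = ((2:ℤ):ZMod n) by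
      rw [← hcast j2 hj2l]; exact_mod_cast hj2w)
    have hb := hband j2 hj2l
    rcases dvd_small2' hn hdv (by omega) (by omega) with h | h <;> omega
  have hj2n : (n:ℤ) - 2 ≤ (j2:ℤ) := by
    have := (hXbound j2 hj2l).1
    omega
  -- compare j1 and j2
  have hj2lt : j2 < j1 - 1 := by
    rcases Nat.lt_or_ge j2 (j1-1) with h | h
    · exact h
    · exfalso
      rcases Nat.eq_or_lt_of_le h with he | hlt
      · rw [← he] at hXj2
        omega
      · -- j2 ≥ j1 : time explosion
        have hj2pos : 1 ≤ j2 := by omega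
        have hdiff := (hXdiff j1 j2 (by omega) hj2l).2
        have hgap := tmgap (j2 - 1 - (j1-1)) (j1-1) (by omega)
        rw [show j1 - 1 + (j2 - 1 - (j1-1)) = j2 - 1 by omega] at hgap
        have hub := (htb (j2-1) (by omega)).2
        -- X j1 - X j2 = n - 1 ≤ j2 - j1
        have : (n:ℤ) - 1 ≤ (j2:ℤ) - j1 := by omega
        omega
  -- conclude sizes
  have hj1big : 2*n - 3 ≤ j1 := by
    have hdiff := (hXdiff j2 (j1-1) (by omega) (by omega)).1
    omega
  have hleq : l = 2*n-3 := by omega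
  have hj1eq : j1 = 2*n-3 := by omega
  have hj2eq : j2 = n-2 := by
    have hdiff := (hXdiff j2 (j1-1) (by omega) (by omega)).1
    omega
  -- times are forced
  have htmeq : ∀ i < l, tm i = i + 1 := by
    intro i hi
    have h1 := tmlb i hi
    have hgap := tmgap (l - 1 - i) i (by omega)
    rw [show i + (l - 1 - i) = l - 1 by omega] at hgap
    have hub := (htb (l-1) (by omega)).2
    have hlb2 := tmlb (l-1) (by omega)
    omega
  -- X is forced
  have hXeq : ∀ i ≤ l, X i = Xc n i := by
    intro i hil
    rcases Nat.lt_or_ge i (n-1) with hc | hc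
    · -- i ≤ n-2 : X i = -i
      have h1 := (hXbound i hil).1
      have h2 := (hXdiff i j2 (by omega) hj2l).2
      rw [Xc, if_pos (by omega)]
      rw [hj2eq] at h2 hXj2
      push_cast [Nat.cast_sub (by omega : 2 ≤ n)] at h2
      omega
    · -- i ≥ n-1 : X i = i + 4 - 2n
      have h1 := (hXdiff j2 i (by omega) hil).1
      have h2 := (hXdiff i j1 (by omega) (by omega)).1
      rw [Xc, if_neg (by omega)]
      rw [hj2eq] at h1 hXj2
      rw [hj1eq] at h2 hXj1
      push_cast [Nat.cast_sub (by omega : 2 ≤ n), Nat.cast_sub (by omega : 3 ≤ 2*n)] at h1 h2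
      omega
  exact ⟨hleq, fun i hil => by rw [hcast i hil, hXeq i hil]; rfl, htmeq⟩


lemma zmod_ne' {x y : ℤ} (h1 : -n < x - y) (h2 : x - y < n) (h3 : x ≠ y) :
    ((x:ZMod n) ≠ (y:ZMod n)) := fun he => by
  have := dvd_small' hn ((zmod_int_eq_iff' x y).1 he) h1 h2
  exact h3 (by omega)

omit hn in
lemma reach_chain (t : ℕ) (h : ℤ)
    (hadj : ∀ k : ℕ, k < n-1 → (Gd n t).Adj ((h+k:ℤ):ZMod n) ((h+(k+1):ℤ):ZMod n)) :
    ∀ k, k ≤ n-1 → (Gd n t).Reachable ((h:ℤ):ZMod n) ((h+k:ℤ):ZMod n) := by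
  intro k
  induction k with
  | zero =>
    intro _
    have : ((h + ((0:ℕ):ℤ) : ℤ) : ZMod n) = ((h:ℤ):ZMod n) := by norm_num
    rw [this]
  | succ m ih =>
    intro hm
    exact (ih (by omega)).trans (hadj m (by omega)).reachable

lemma Gd_connected (t : ℕ) : (Gd n t).Connected := by
  haveI : NeZero n := ⟨by omega⟩
  have key : ∃ h : ℤ, ∀ k : ℕ, k < n-1 →
      (Gd n t).Adj ((h+k:ℤ):ZMod n) ((h+(k+1):ℤ):ZMod n) := by
    by_cases ht : t ≤ n - 2
    · refine ⟨1, fun k hk => ?_⟩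
      refine ⟨⟨zmod_ne' hn (by omega) (by omega) (by omega), Or.inl (by push_cast; ring)⟩, ?_⟩
      rw [if_pos ht]
      rintro (⟨h0, h1⟩ | ⟨h0, h1⟩)
      · have := dvd_small' hn ((zmod_int_eq_iff' (1 + (k:ℤ)) 0).1 (by exact_mod_cast h0)) (by omega) (by omega)
        omega
      · have hk0 := dvd_small' hn ((zmod_int_eq_iff' (1 + (k:ℤ)) 1).1 (by exact_mod_cast h0)) (by omega) (by omega)
        have := dvd_small' hn ((zmod_int_eq_iff' (1 + ((k:ℤ)+1)) 0).1 (by exact_mod_cast h1)) (by omega) (by omega)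
        omega
    · refine ⟨2, fun k hk => ?_⟩
      refine ⟨⟨zmod_ne' hn (by omega) (by omega) (by omega), Or.inl (by push_cast; ring)⟩, ?_⟩
      rw [if_neg ht]
      rintro (⟨h0, h1⟩ | ⟨h0, h1⟩)
      · have := dvd_small' hn ((zmod_int_eq_iff' (2 + (k:ℤ)) 1).1 (by exact_mod_cast h0)) (by omega) (by omega)
        omega
      · have hk0 := dvd_small' hn ((zmod_int_eq_iff' (2 + (k:ℤ)) 2).1 (by exact_mod_cast h0)) (by omega) (by omega)
        have := dvd_small' hn ((zmod_int_eq_iff' (2 + ((k:ℤ)+1)) 1).1 (by exact_mod_cast h1)) (by omega) (by omega)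
        omega
  obtain ⟨h, hadj⟩ := key
  have reach : ∀ v : ZMod n, (Gd n t).Reachable ((h:ℤ):ZMod n) v := by
    intro v
    have hv : v = ((h + ((v - (h:ZMod n)).val : ℕ) : ℤ) : ZMod n) := by
      push_cast
      rw [ZMod.natCast_val, ZMod.cast_id]
      ring
    rw [hv]
    exact reach_chain t h hadj _ (by have := ZMod.val_lt (v - (h:ZMod n)); omega)
  rw [SimpleGraph.connected_iff]
  exact ⟨fun u v => (reach u).symm.trans (reach v), ⟨0⟩⟩


lemma Xc_hi {i : ℕ} (h : n-2 ≤ i) : Xc n i = (i:ℤ) + 4 - 2*n := by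
  unfold Xc
  split
  · have : i = n - 2 := by omega
    subst this
    push_cast [Nat.cast_sub (by omega : 2 ≤ n)]
    ring
  · rfl

omit hn in
lemma Xc_lo {i : ℕ} (h : i ≤ n-2) : Xc n i = -(i:ℤ) := if_pos h

lemma canon_journey :
    IsJourney (Gd n) (2*n-3) (2*n-3) (wc n) (· + 1) ∧ wc n 0 = 0 ∧
    (∀ v : ZMod n, ∃ i ≤ 2*n-3, wc n i = v) := by
  have hw0 : wc n 0 = 0 := by
    unfold wc
    rw [Xc_lo (by omega)]
    norm_num
  refine ⟨⟨?_, ?_, ?_⟩, hw0, ?_⟩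
  · intro i hi
    by_cases hc : i + 1 ≤ n - 2
    · -- descending phase, edge {-(i), -(i+1)}, time i+1 ≤ n-2
      have e1 : Xc n i = -(i:ℤ) := Xc_lo (by omega)
      have e2 : Xc n (i+1) = -((i:ℤ)+1) := by rw [Xc_lo (by omega)]; push_cast; ring
      refine ⟨⟨?_, Or.inr ?_⟩, ?_⟩
      · unfold wc
        rw [e1, e2]
        intro he
        have := dvd_small' hn ((zmod_int_eq_iff' _ _).1 he) (by omega) (by omega)
        omega
      · unfold wc
        rw [e1, e2]
        push_cast
        ring
      · rw [if_pos hc]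
        unfold wc
        rw [e1, e2]
        rintro (⟨h0, h1⟩ | ⟨h0, h1⟩)
        · have hi0 := dvd_small' hn ((zmod_int_eq_iff' (-(i:ℤ)) 0).1 (by exact_mod_cast h0)) (by omega) (by omega)
          have := dvd_small' hn ((zmod_int_eq_iff' (-((i:ℤ)+1)) 1).1 (by exact_mod_cast h1)) (by omega) (by omega)
          omega
        · have := dvd_small' hn ((zmod_int_eq_iff' (-(i:ℤ)) 1).1 (by exact_mod_cast h0)) (by omega) (by omega)
          omega
    · -- ascending phase, time i+1 > n-2, i ≥ n-2, i ≤ 2n-4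
      have e1 : Xc n i = (i:ℤ) + 4 - 2*n := Xc_hi hn (by omega)
      have e2 : Xc n (i+1) = (i:ℤ) + 5 - 2*n := by rw [Xc_hi hn (by omega)]; push_cast; ring
      refine ⟨⟨?_, Or.inl ?_⟩, ?_⟩
      · unfold wc
        rw [e1, e2]
        intro he
        have := dvd_small' hn ((zmod_int_eq_iff' _ _).1 he) (by omega) (by omega)
        omega
      · unfold wc
        rw [e1, e2]
        push_cast
        ring
      · rw [if_neg hc]
        unfold wc
        rw [e1, e2]
        rintro (⟨h0, h1⟩ | ⟨h0, h1⟩)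
        · have := dvd_small' hn ((zmod_int_eq_iff' ((i:ℤ)+4-2*n) 1).1 (by exact_mod_cast h0)) (by omega) (by omega)
          omega
        · have hi1 := dvd_small' hn ((zmod_int_eq_iff' ((i:ℤ)+5-2*n) 1).1 (by exact_mod_cast h1)) (by omega) (by omega)
          have := dvd_small' hn ((zmod_int_eq_iff' ((i:ℤ)+4-2*n) 2).1 (by exact_mod_cast h0)) (by omega) (by omega)
          omega
  · intro i hi
    have h1 : (1:ℕ) ≤ i + 1 := by omega
    have h2 : i + 1 ≤ 2*n-3 := by omega
    exact ⟨h1, h2⟩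
  · intro i j hij hj
    show i + 1 < j + 1
    omega
  · -- coverage
    intro v
    haveI : NeZero n := ⟨by omega⟩
    obtain ⟨k, hkn, hkv⟩ : ∃ k:ℕ, k < n ∧ ((k:ℤ):ZMod n) = v :=
      ⟨v.val, ZMod.val_lt v, by push_cast; rw [ZMod.natCast_val, ZMod.cast_id]⟩
    rcases Nat.lt_or_ge k 1 with hk | hk
    · refine ⟨0, by omega, ?_⟩
      rw [hw0, ← hkv]
      have : k = 0 := by omega
      rw [this]
      norm_num
    · rcases Nat.lt_or_ge k 2 with hk2 | hk2
      · refine ⟨2*n-3, le_refl _, ?_⟩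
        have hk1 : k = 1 := by omega
        rw [← hkv, hk1]
        unfold wc
        rw [Xc_hi hn (by omega), zmod_int_eq_iff']
        exact ⟨0, by push_cast [Nat.cast_sub (by omega : 3 ≤ 2*n)]; ring⟩
      · refine ⟨n - k, by omega, ?_⟩
        rw [← hkv]
        unfold wc
        rw [Xc_lo (by omega), zmod_int_eq_iff']
        exact ⟨-1, by push_cast [Nat.cast_sub (by omega : k ≤ n)]; ring⟩


end aux

theorem stmt_12 (n : ℕ) (hn : 3 ≤ n) :
    ∃ (G : ℕ → SimpleGraph (ZMod n)) (s : ZMod n),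
      (∀ t, G t ≤ cycleG n) ∧
      (∀ t, 1 ≤ t → t ≤ 2 * n - 3 → (G t).Connected) ∧
      (∀ i j : ZMod n, (cycleG n).Adj i j → ∃ t, 1 ≤ t ∧ t ≤ 2 * n - 3 ∧ (G t).Adj i j) ∧
      (∃ (l : ℕ) (w : ℕ → ZMod n) (tm : ℕ → ℕ), IsJourney G (2 * n - 3) l w tm ∧
        w 0 = s ∧ (∀ v : ZMod n, ∃ i ≤ l, w i = v)) ∧
      (∀ (l : ℕ) (w : ℕ → ZMod n) (tm : ℕ → ℕ), IsJourney G (2 * n - 3) l w tm →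
        w 0 = s → (∀ v : ZMod n, ∃ i ≤ l, w i = v) → l = 2 * n - 3) ∧
      (∀ (l₁ : ℕ) (w₁ : ℕ → ZMod n) (tm₁ : ℕ → ℕ) (l₂ : ℕ) (w₂ : ℕ → ZMod n) (tm₂ : ℕ → ℕ),
        IsJourney G (2 * n - 3) l₁ w₁ tm₁ → w₁ 0 = s → (∀ v : ZMod n, ∃ i ≤ l₁, w₁ i = v) →
        IsJourney G (2 * n - 3) l₂ w₂ tm₂ → w₂ 0 = s → (∀ v : ZMod n, ∃ i ≤ l₂, w₂ i = v) →
        l₁ = l₂ ∧ (∀ i ≤ l₁, w₁ i = w₂ i) ∧ (∀ i < l₁, tm₁ i = tm₂ i)) := by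
  refine ⟨Gd n, 0, ?_, ?_, ?_, ?_, ?_, ?_⟩
  · intro t v u h
    exact h.1
  · intro t _ _
    exact Gd_connected hn t
  · intro i j hij
    have z02 : (0:ZMod n) ≠ 2 := by exact_mod_cast zmod_ne' hn (x:=0) (y:=2) (by omega) (by omega) (by omega)
    have z01 : (0:ZMod n) ≠ 1 := by exact_mod_cast zmod_ne' hn (x:=0) (y:=1) (by omega) (by omega) (by omega)
    have z12 : (1:ZMod n) ≠ 2 := by exact_mod_cast zmod_ne' hn (x:=1) (y:=2) (by omega) (by omega) (by omega)
    by_cases h01 : (i = 0 ∧ j = 1) ∨ (i = 1 ∧ j = 0)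
    · refine ⟨n-1, by omega, by omega, ⟨hij, ?_⟩⟩
      rw [if_neg (by omega)]
      rcases h01 with ⟨hi0, hj1⟩ | ⟨hi1, hj0⟩
      · rintro (⟨ha, _⟩ | ⟨ha, _⟩)
        · exact z01 (hi0 ▸ ha)
        · exact z02 (hi0 ▸ ha)
      · rintro (⟨_, hb⟩ | ⟨ha, _⟩)
        · exact z02 (hj0 ▸ hb)
        · exact z12 (hi1 ▸ ha)
    · exact ⟨1, le_refl 1, by omega, ⟨hij, by rw [if_pos (by omega)]; exact h01⟩⟩
  · obtain ⟨hJ, hw0, hcov⟩ := canon_journey hn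
    exact ⟨2*n-3, wc n, (· + 1), hJ, hw0, hcov⟩
  · intro l w tm hJ hw0 hcov
    exact (master hn hJ hw0 hcov).1
  · intro l₁ w₁ tm₁ l₂ w₂ tm₂ hJ₁ hw₁ hcov₁ hJ₂ hw₂ hcov₂
    obtain ⟨hl₁, hwe₁, hte₁⟩ := master hn hJ₁ hw₁ hcov₁
    obtain ⟨hl₂, hwe₂, hte₂⟩ := master hn hJ₂ hw₂ hcov₂
    refine ⟨by omega, ?_, ?_⟩
    · intro i hi
      rw [hwe₁ i hi, hwe₂ i (by omega)]
    · intro i hi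
      rw [hte₁ i hi, hte₂ i (by omega)]
end

section
/- Let 𝒢 be a temporal graph whose underlying graph is a cycle on n vertices, with every snapshot connected and lifetime L ≥ n − 1. Then for every time step t with t ≤ L − n + 2 there exists a vertex s_h(t) such that an agent starting at s_h(t) at time t and moving one edge clockwise at each of the following n − 1 time steps never encounters a missing edge, and hence visits all n vertices in exactly n − 1 time steps; symmetrically there exists such a vertex s_a(t) for the counter-clockwise direction. -/
lemma arc_iff (n : ℕ) (hn : 3 ≤ n) (a b i : ZMod n) (hab : a ≠ b) (hia : i ≠ a)
    (hib : i ≠ b) :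
    (1 ≤ (i - a).val ∧ (i - a).val ≤ (b - a).val) ↔
      (1 ≤ (i + 1 - a).val ∧ (i + 1 - a).val ≤ (b - a).val) := by
  haveI : NeZero n := ⟨by omega⟩
  have h1 : (i + 1 - a) = (i - a) + 1 := by ring
  rw [h1, ZMod.val_add, ZMod.val_one_eq_one_mod]
  have hu : (i - a).val < n := ZMod.val_lt _
  have hd : (b - a).val < n := ZMod.val_lt _
  have hd1 : (b - a).val ≠ 0 := by
    simp [ZMod.val_eq_zero, sub_eq_zero]; exact fun h => hab h.symm
  have hu0 : (i - a).val ≠ 0 := by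
    simp [ZMod.val_eq_zero, sub_eq_zero]; exact hia
  have hud : (i - a).val ≠ (b - a).val := by
    intro h
    exact hib (by have := ZMod.val_injective n h; exact sub_left_injective.eq_iff.mp this)
  have h2 : 1 % n = 1 := Nat.mod_eq_of_lt (by omega)
  rw [h2]
  rcases Nat.lt_or_ge ((i - a).val + 1) n with h | h
  · rw [Nat.mod_eq_of_lt h]; omega
  · have : (i - a).val + 1 = n := by omega
    rw [this, Nat.mod_self]; omega

lemma missing_unique (n : ℕ) (hn : 3 ≤ n) (H : SimpleGraph (ZMod n))
    (hsub : H ≤ cycleG n) (hc : H.Connected) (a b : ZMod n)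
    (ha : ¬ H.Adj a (a + 1)) (hb : ¬ H.Adj b (b + 1)) : a = b := by
  by_contra hab
  set P : ZMod n → Prop := fun x => 1 ≤ (x - a).val ∧ (x - a).val ≤ (b - a).val with hP
  have key : ∀ u v : ZMod n, H.Adj u v → (P u ↔ P v) := by
    intro u v huv
    obtain ⟨hne, hcase⟩ := hsub huv
    rcases hcase with h | h
    · subst h
      have hua : u ≠ a := fun h => ha (h ▸ huv)
      have hub : u ≠ b := fun h => hb (h ▸ huv)
      exact arc_iff n hn a b u hab hua hub
    · subst h
      have hva : v ≠ a := fun h => ha (h ▸ huv.symm)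
      have hvb : v ≠ b := fun h => hb (h ▸ huv.symm)
      exact (arc_iff n hn a b v hab hva hvb).symm
  have walkinv : ∀ {x y : ZMod n} (_ : H.Walk x y), P x ↔ P y := by
    intro x y w
    induction w with
    | nil => rfl
    | cons h p ih => exact (key _ _ h).trans ih
  obtain ⟨w⟩ := hc.preconnected a (a + 1)
  have hPa : ¬ P a := by simp [hP]
  have hPa1 : P (a + 1) := by
    haveI : NeZero n := ⟨by omega⟩
    constructor
    · simp [ZMod.val_one_eq_one_mod, Nat.mod_eq_of_lt (by omega : 1 < n)]
    · have : (b - a).val ≠ 0 := by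
        simp [ZMod.val_eq_zero, sub_eq_zero]; exact fun h => hab h.symm
      simp only [add_sub_cancel_left, ZMod.val_one_eq_one_mod,
        Nat.mod_eq_of_lt (by omega : 1 < n)]
      omega
  exact hPa ((walkinv w).mpr hPa1)

lemma exists_avoid (n : ℕ) (hn : 3 ≤ n) (f : ℕ → ZMod n) :
    ∃ s : ZMod n, ∀ j < n - 1, s ≠ f j := by
  haveI : NeZero n := ⟨by omega⟩
  set F : Finset (ZMod n) := (Finset.range (n - 1)).image f with hF
  have hcard : F.card < Fintype.card (ZMod n) := by
    calc F.card ≤ (Finset.range (n - 1)).card := Finset.card_image_le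
    _ = n - 1 := Finset.card_range _
    _ < n := by omega
    _ = Fintype.card (ZMod n) := (ZMod.card n).symm
  have hne : Fᶜ.Nonempty := by
    rw [← Finset.card_pos, Finset.card_compl]; omega
  obtain ⟨s, hs'⟩ := hne
  have hs : s ∉ F := Finset.mem_compl.mp hs'
  exact ⟨s, fun j hj hsj => hs (Finset.mem_image.mpr ⟨j, Finset.mem_range.mpr hj, hsj.symm⟩)⟩

theorem stmt_17 (n : ℕ) (hn : 3 ≤ n) (G : ℕ → SimpleGraph (ZMod n)) (L : ℕ)
    (hL : n - 1 ≤ L)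
    (hsub : ∀ t, G t ≤ cycleG n)
    (hconn : ∀ t, 1 ≤ t → t ≤ L → (G t).Connected)
    (hunder : ∀ i j : ZMod n, (cycleG n).Adj i j → ∃ t, 1 ≤ t ∧ t ≤ L ∧ (G t).Adj i j)
    (t : ℕ) (ht1 : 1 ≤ t) (ht : t + n ≤ L + 2) :
    (∃ sh : ZMod n, ∀ j < n - 1, (G (t + j)).Adj (sh + (j : ZMod n)) (sh + (j : ZMod n) + 1)) ∧
    (∃ sa : ZMod n, ∀ j < n - 1, (G (t + j)).Adj (sa - (j : ZMod n)) (sa - (j : ZMod n) - 1)) := by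
  classical
  have hconn' : ∀ j < n - 1, (G (t + j)).Connected := fun j hj =>
    hconn (t + j) (by omega) (by omega)
  -- the (unique) missing edge chooser
  set m : ℕ → ZMod n := fun j =>
    if h : ∃ a : ZMod n, ¬ (G (t + j)).Adj a (a + 1) then h.choose else 0 with hm
  have hmspec : ∀ j < n - 1, ∀ a : ZMod n, ¬ (G (t + j)).Adj a (a + 1) → a = m j := by
    intro j hj a ha
    have hex : ∃ a : ZMod n, ¬ (G (t + j)).Adj a (a + 1) := ⟨a, ha⟩
    rw [hm]; simp only [dif_pos hex]
    exact missing_unique n hn (G (t + j)) (hsub _) (hconn' j hj) a hex.choose ha hex.choose_spec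
  constructor
  · obtain ⟨sh, hsh⟩ := exists_avoid n hn (fun j => m j - (j : ZMod n))
    refine ⟨sh, fun j hj => ?_⟩
    by_contra h
    have := hmspec j hj (sh + (j : ZMod n)) h
    exact hsh j hj (by rw [← this]; ring)
  · obtain ⟨sa, hsa⟩ := exists_avoid n hn (fun j => m j + (j : ZMod n) + 1)
    refine ⟨sa, fun j hj => ?_⟩
    by_contra h
    have h' : ¬ (G (t + j)).Adj (sa - (j : ZMod n) - 1) (sa - (j : ZMod n) - 1 + 1) := by
      intro hh
      exact h (by simpa using hh.symm)
    have := hmspec j hj _ h'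
    exact hsa j hj (by rw [← this]; ring)
end
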